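/- arXiv:1302.3741 — 8 statements merged into one kernel-verified Lean document; each statement's English description precedes it below -/
import Mathlib

section
/- Let A be an irreducible nonnegative n×n real matrix whose smallest nonzero entry is a_min, and let u ∈ ℝ^n be a nonzero nonnegative vector with Au ≤ u (componentwise). Then a_min ≤ 1, every coordinate of u is strictly positive, and u_min / u_max ≥ a_min^n, where u_min and u_max denote the minimum and maximum coordinates of u. -/
open Matrix

open List in
lemma my_chain_snoc {α : Type*} {r : α → α → Prop} :
    ∀ (l : List α) (i c : α), Chain r i l → r ((i :: l).getLast (cons_ne_nil _ _)) c →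
      Chain r i (l ++ [c])
  | [], i, c, _, h => by exact Chain.cons h Chain.nil
  | b :: l, i, c, hc, h => by
    rw [Chain, isChain_cons_cons] at hc
    exact Chain.cons hc.1 (my_chain_snoc l b c hc.2 (by simpa [getLast_cons_cons] using h))

open List in
lemma my_exists_nodup_chain {α : Type*} {r : α → α → Prop} {i j : α}
    (h : Relation.ReflTransGen r i j) :
    ∃ l : List α, Chain r i l ∧ (i :: l).getLast (cons_ne_nil _ _) = j ∧ (i :: l).Nodup := by
  induction h with
  | refl => exact ⟨[], Chain.nil, rfl, nodup_singleton i⟩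
  | tail hab hbc ih =>
    obtain ⟨l, hc, hlast, hnd⟩ := ih
    rename_i b c
    by_cases hmem : c ∈ i :: l
    · rcases mem_cons.mp hmem with rfl | hmem'
      · exact ⟨[], Chain.nil, rfl, nodup_singleton _⟩
      · obtain ⟨l₁, l₂, rfl⟩ := append_of_mem hmem'
        refine ⟨l₁ ++ [c], (isChain_cons_split.mp hc).1, ?_, ?_⟩
        · exact List.getLast_concat (l := i :: l₁)
        · refine hnd.sublist ?_
          refine (Sublist.refl [i]).append ?_
          exact (Sublist.refl l₁).append (cons_sublist_cons.mpr (nil_sublist l₂))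
    · refine ⟨l ++ [c], my_chain_snoc l i c hc (hlast ▸ hbc), ?_, ?_⟩
      · exact List.getLast_concat (l := i :: l)
      · have : (i :: (l ++ [c])) = (i :: l) ++ [c] := by simp
        rw [this, nodup_append]
        exact ⟨hnd, nodup_singleton c, by simp at hmem ⊢; exact ⟨fun h => hmem.1 h.symm, fun a ha h => hmem.2 (h ▸ ha)⟩⟩

/-- A nonnegative square matrix is irreducible if its support digraph is strongly connected. -/
def MatIrreducible {n : ℕ} (A : Matrix (Fin n) (Fin n) ℝ) : Prop :=
  ∀ i j : Fin n, Relation.ReflTransGen (fun a b => 0 < A a b) i j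

theorem stmt0 {n : ℕ} (hn : 0 < n) (A : Matrix (Fin n) (Fin n) ℝ)
    (hA : ∀ i j, 0 ≤ A i j) (hirr : MatIrreducible A)
    (amin : ℝ) (hmin : ∀ i j, A i j ≠ 0 → amin ≤ A i j)
    (hex : ∃ i j, A i j = amin ∧ A i j ≠ 0)
    (u : Fin n → ℝ) (hu : 0 ≤ u) (hu0 : u ≠ 0) (hAu : A *ᵥ u ≤ u) :
    amin ≤ 1 ∧ (∀ i, 0 < u i) ∧ amin ^ n ≤ (⨅ i, u i) / (⨆ i, u i) := by
  haveI : NeZero n := ⟨hn.ne'⟩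
  obtain ⟨i0, j0, heq, hne⟩ := hex
  have hamin_pos : 0 < amin := heq ▸ (hA i0 j0).lt_of_ne (Ne.symm hne)
  -- key single-step estimate
  have star : ∀ i j : Fin n, 0 < A i j → amin * u j ≤ u i := by
    intro i j hij
    have h1 : A i j * u j ≤ ∑ k, A i k * u k := by
      apply Finset.single_le_sum (f := fun k => A i k * u k)
      · exact fun k _ => mul_nonneg (hA i k) (hu k)
      · exact Finset.mem_univ j
    have h2 : (A *ᵥ u) i = ∑ k, A i k * u k := by
      simp [Matrix.mulVec, dotProduct]
    have h3 : amin * u j ≤ A i j * u j :=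
      mul_le_mul_of_nonneg_right (hmin i j hij.ne') (hu j)
    exact h3.trans (h1.trans (h2 ▸ hAu i))
  -- positivity of u
  have hupos : ∀ i, 0 < u i := by
    have : ∃ j, 0 < u j := by
      by_contra h
      push_neg at h
      exact hu0 (funext fun j => le_antisymm (h j) (hu j))
    obtain ⟨j, hj⟩ := this
    intro i
    refine Relation.ReflTransGen.head_induction_on (hirr i j) hj ?_
    intro a b hab _ hb
    exact lt_of_lt_of_le (mul_pos hamin_pos hb) (star a b hab)
  -- chain estimate
  have key : ∀ (l : List (Fin n)) (i : Fin n), List.Chain (fun a b => 0 < A a b) i l →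
      amin ^ l.length * u ((i :: l).getLast (List.cons_ne_nil _ _)) ≤ u i := by
    intro l
    induction l with
    | nil => intro i _; simp
    | cons b l ih =>
      intro i hc
      rw [List.Chain, List.isChain_cons_cons] at hc
      have h1 := ih b hc.2
      have h2 := star i b hc.1
      have hlast : ((i :: b :: l).getLast (List.cons_ne_nil _ _))
          = ((b :: l).getLast (List.cons_ne_nil _ _)) := List.getLast_cons_cons
      rw [hlast]
      calc amin ^ (b :: l).length * u ((b :: l).getLast (List.cons_ne_nil _ _))
          = amin * (amin ^ l.length * u ((b :: l).getLast (List.cons_ne_nil _ _))) := by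
            rw [List.length_cons, pow_succ]; ring
        _ ≤ amin * u b := by
            exact mul_le_mul_of_nonneg_left h1 hamin_pos.le
        _ ≤ u i := h2
  -- amin ≤ 1
  have hedge : 0 < A i0 j0 := (hA i0 j0).lt_of_ne (Ne.symm hne)
  obtain ⟨l, hlc, hll, _⟩ := my_exists_nodup_chain (hirr j0 i0)
  have hcyc : amin ^ (l.length + 1) * u i0 ≤ u i0 := by
    have h1 : amin ^ l.length * u i0 ≤ u j0 := by
      have := key l j0 hlc
      rwa [hll] at this
    calc amin ^ (l.length + 1) * u i0 = amin * (amin ^ l.length * u i0) := by ring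
      _ ≤ amin * u j0 := mul_le_mul_of_nonneg_left h1 hamin_pos.le
      _ ≤ u i0 := star i0 j0 hedge
  have hamin1 : amin ≤ 1 := by
    by_contra h
    push_neg at h
    have : (1 : ℝ) < amin ^ (l.length + 1) := one_lt_pow₀ h (Nat.succ_ne_zero _)
    nlinarith [hupos i0]
  refine ⟨hamin1, hupos, ?_⟩
  -- sup and inf
  obtain ⟨jM, hjM⟩ := Finite.exists_max u
  obtain ⟨jm, hjm⟩ := Finite.exists_min u
  have hbddA : BddAbove (Set.range u) := (Set.finite_range u).bddAbove
  have hbddB : BddBelow (Set.range u) := (Set.finite_range u).bddBelow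
  have hsup : (⨆ i, u i) = u jM :=
    le_antisymm (ciSup_le hjM) (le_ciSup hbddA jM)
  have hinf : (⨅ i, u i) = u jm :=
    le_antisymm (ciInf_le hbddB jm) (le_ciInf hjm)
  rw [hsup, hinf, le_div_iff₀ (hupos jM)]
  -- path from jm to jM of length ≤ n
  obtain ⟨l', hlc', hll', hnd'⟩ := my_exists_nodup_chain (hirr jm jM)
  have hlen : l'.length ≤ n := by
    have hcard := hnd'.length_le_card
    simp [Fintype.card_fin] at hcard
    omega
  have h1 : amin ^ l'.length * u jM ≤ u jm := by
    have := key l' jm hlc'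
    rwa [hll'] at this
  have h2 : amin ^ n ≤ amin ^ l'.length :=
    pow_le_pow_of_le_one hamin_pos.le hamin1 hlen
  calc amin ^ n * u jM ≤ amin ^ l'.length * u jM :=
        mul_le_mul_of_nonneg_right h2 (hu jM)
    _ ≤ u jm := h1
end

section
/- Let x = P(x) be a quadratic MPS with least fixed point q* ∈ ℝ^n_{≥0}, and let z ∈ ℝ^n be a vector such that I − B(z) is nonsingular, where B is the Jacobian of P. Then q* − N_P(z) = (I − B(z))^{−1} · ((B(q*) − B(z))/2) · (q* − z), where N_P(z) := z + (I − B(z))^{−1}(P(z) − z) is the Newton operator. -/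
open Matrix MvPolynomial


/-- Evaluation of a vector of multivariate polynomials. -/
noncomputable def evalVec {n : ℕ} (P : Fin n → MvPolynomial (Fin n) ℝ) (x : Fin n → ℝ) :
    Fin n → ℝ := fun i => MvPolynomial.eval x (P i)

/-- The Jacobian matrix B(x)_{ij} = ∂P_i/∂x_j evaluated at x. -/
noncomputable def jacob {n : ℕ} (P : Fin n → MvPolynomial (Fin n) ℝ) (x : Fin n → ℝ) :
    Matrix (Fin n) (Fin n) ℝ :=
  Matrix.of fun i j => MvPolynomial.eval x (MvPolynomial.pderiv j (P i))

/-- The Newton operator N_P(z) = z + (I - B(z))⁻¹ (P(z) - z). -/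
noncomputable def newtonOp {n : ℕ} (P : Fin n → MvPolynomial (Fin n) ℝ) (z : Fin n → ℝ) :
    Fin n → ℝ := z + (1 - jacob P z)⁻¹ *ᵥ (evalVec P z - z)

lemma classify {n : ℕ} (m : Fin n →₀ ℕ) (h : (m.sum fun _ e => e) ≤ 2) :
    m = 0 ∨ (∃ j, m = Finsupp.single j 1) ∨
      (∃ j k, m = Finsupp.single j 1 + Finsupp.single k 1) := by
  induction m using Finsupp.induction with
  | zero => exact Or.inl rfl
  | single_add a b f ha hb ih =>
    rw [Finsupp.sum_add_index (by simp) (by intros; rfl), Finsupp.sum_single_index rfl] at h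
    have hb2 : b ≤ 2 := le_trans (Nat.le_add_right _ _) h
    interval_cases b
    · omega
    · rcases ih (by omega) with h0 | ⟨j, hj⟩ | ⟨j, k, hjk⟩
      · exact Or.inr (Or.inl ⟨a, by rw [h0, add_zero]⟩)
      · exact Or.inr (Or.inr ⟨a, j, by rw [hj]⟩)
      · rw [hjk] at h
        rw [Finsupp.sum_add_index (by simp) (by intros; rfl)] at h
        simp [Finsupp.sum_single_index] at h
    · have hfs : (f.sum fun _ e => e) = 0 := by omega
      have hf : f = 0 := by
        ext x
        by_cases hx : x ∈ f.support
        · exact (Finset.sum_eq_zero_iff.mp hfs x hx)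
        · simpa using Finsupp.notMem_support_iff.mp hx
      subst hf
      exact Or.inr (Or.inr ⟨a, a, by rw [add_zero, ← Finsupp.single_add]⟩)

lemma mono_taylor {n : ℕ} (q z : Fin n → ℝ) (m : Fin n →₀ ℕ)
    (hm : (m.sum fun _ e => e) ≤ 2) (c : ℝ) :
    eval q (monomial m c) - eval z (monomial m c)
      = (1/2) * ∑ l, (eval q (pderiv l (monomial m c))
          + eval z (pderiv l (monomial m c))) * (q l - z l) := by
  rcases classify m hm with h0 | ⟨j, hj⟩ | ⟨j, k, hjk⟩
  · subst h0
    simp [monomial_zero']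
  · subst hj
    have h1 : monomial (Finsupp.single j 1) c = C c * X j := by
      rw [C_mul_X_eq_monomial]
    rw [h1]
    have hsum : ∀ k : Fin n,
        (eval q (pderiv k (C c * X j)) + eval z (pderiv k (C c * X j))) * (q k - z k)
          = if k = j then (c + c) * (q k - z k) else 0 := by
      intro k
      by_cases hk : k = j
      · subst hk; simp [pderiv_X_self]
      · simp [pderiv_X, Pi.single_apply, hk]
    rw [Finset.sum_congr rfl fun k _ => hsum k, Finset.sum_ite_eq' Finset.univ j _]
    simp
    ring
  · subst hjk
    have hX : ∀ i : Fin n, (X i : MvPolynomial (Fin n) ℝ)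
        = monomial (Finsupp.single i 1) 1 := fun _ => rfl
    have h1 : monomial (Finsupp.single j 1 + Finsupp.single k 1) c = C c * X j * X k := by
      rw [hX, hX, C_apply, monomial_mul, monomial_mul]
      simp
    rw [h1]
    have hsum : ∀ l : Fin n,
        (eval q (pderiv l (C c * X j * X k)) + eval z (pderiv l (C c * X j * X k))) * (q l - z l)
          = (if l = j then c * (q k + z k) * (q l - z l) else 0)
            + (if l = k then c * (q j + z j) * (q l - z l) else 0) := by
      intro l
      rcases eq_or_ne j k with e | e
      · subst e
        rcases eq_or_ne l j with hj | hj <;>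
          simp [hj, pderiv_X_self, pderiv_X, Pi.single_apply] <;> (first | (left; ring) | ring)
      · rcases eq_or_ne l j with hj | hj <;> rcases eq_or_ne l k with hk | hk <;>
          simp [hj, hk, e, e.symm, pderiv_X_self, pderiv_X, Pi.single_apply] <;>
            (first | (left; ring) | ring)
    rw [Finset.sum_congr rfl fun l _ => hsum l, Finset.sum_add_distrib,
      Finset.sum_ite_eq' Finset.univ j _, Finset.sum_ite_eq' Finset.univ k _]
    simp
    ring

lemma taylor2 {n : ℕ} (q z : Fin n → ℝ) (p : MvPolynomial (Fin n) ℝ)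
    (hd : p.totalDegree ≤ 2) :
    eval q p - eval z p
      = (1/2) * ∑ l, (eval q (pderiv l p) + eval z (pderiv l p)) * (q l - z l) := by
  calc eval q p - eval z p
      = ∑ m ∈ p.support, (eval q (monomial m (coeff m p)) - eval z (monomial m (coeff m p))) := by
        rw [Finset.sum_sub_distrib, ← map_sum, ← map_sum, ← as_sum]
    _ = ∑ m ∈ p.support, (1/2) * ∑ l, (eval q (pderiv l (monomial m (coeff m p)))
          + eval z (pderiv l (monomial m (coeff m p)))) * (q l - z l) :=
        Finset.sum_congr rfl fun m hm =>
          mono_taylor q z m (le_trans (le_totalDegree hm) hd) _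
    _ = (1/2) * ∑ l, (eval q (pderiv l p) + eval z (pderiv l p)) * (q l - z l) := by
        rw [← Finset.mul_sum]
        congr 1
        rw [Finset.sum_comm]
        refine Finset.sum_congr rfl fun l _ => ?_
        rw [← Finset.sum_mul]
        congr 1
        rw [Finset.sum_add_distrib, ← map_sum, ← map_sum, ← map_sum, ← map_sum, ← as_sum]

theorem stmt2 {n : ℕ} (P : Fin n → MvPolynomial (Fin n) ℝ)
    (hdeg : ∀ i, (P i).totalDegree ≤ 2) (hpos : ∀ i m, 0 ≤ (P i).coeff m)
    (q : Fin n → ℝ) (hq0 : 0 ≤ q) (hfix : evalVec P q = q)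
    (hleast : ∀ r : Fin n → ℝ, 0 ≤ r → evalVec P r = r → q ≤ r)
    (z : Fin n → ℝ) (hz : IsUnit (1 - jacob P z).det) :
    q - newtonOp P z =
      (1 - jacob P z)⁻¹ *ᵥ ((((1 : ℝ) / 2) • (jacob P q - jacob P z)) *ᵥ (q - z)) := by
  set A := 1 - jacob P z with hA
  have hTay : evalVec P q - evalVec P z
      = (((1:ℝ)/2) • (jacob P q + jacob P z)) *ᵥ (q - z) := by
    funext i
    have h := taylor2 q z (P i) (hdeg i)
    simp only [Pi.sub_apply, evalVec, jacob, mulVec, dotProduct, Matrix.smul_apply,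
      Matrix.add_apply, Matrix.of_apply, smul_eq_mul]
    rw [h, Finset.mul_sum]
    exact Finset.sum_congr rfl fun l _ => by ring
  have h1 : q - newtonOp P z = (q - z) - A⁻¹ *ᵥ (evalVec P z - z) := by
    funext i; simp [newtonOp]; ring
  have h2 : q - z = A⁻¹ *ᵥ (A *ᵥ (q - z)) := by
    rw [mulVec_mulVec, nonsing_inv_mul _ hz, one_mulVec]
  have hM : ((1:ℝ)/2) • (jacob P q + jacob P z) - jacob P z
      = ((1:ℝ)/2) • (jacob P q - jacob P z) := by
    ext i j
    simp [Matrix.smul_apply, Matrix.sub_apply, Matrix.add_apply]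
    ring
  have h3 : A *ᵥ (q - z) - (evalVec P z - z)
      = (evalVec P q - evalVec P z) - jacob P z *ᵥ (q - z) := by
    rw [hA, sub_mulVec, one_mulVec, hfix]
    abel
  have h4 : A⁻¹ *ᵥ (A *ᵥ (q - z) - (evalVec P z - z))
      = (q - z) - A⁻¹ *ᵥ (evalVec P z - z) := by
    rw [mulVec_sub, ← h2]
  rw [h1, ← h4, h3, hTay, ← sub_mulVec, hM]
end

section
/- Let x = P(x) be a strongly connected MPS with least fixed point q* > 0, and let B(x) be its Jacobian matrix. Then ρ(B(q*)) ≤ 1, and for every vector y with 0 ≤ y < q* (strict inequality in every coordinate), ρ(B(y)) < 1, where ρ denotes spectral radius. -/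
open Matrix MvPolynomial
open scoped ENNReal NNReal

/-- The spectral radius of a real matrix, as the spectral radius of its
complexification. -/
noncomputable def specRad {n : ℕ} (A : Matrix (Fin n) (Fin n) ℝ) : ENNReal :=
  spectralRadius ℂ (A.map (algebraMap ℝ ℂ))

/-- The dependency graph of an MPS is strongly connected: variable j appears in P_i
iff the partial derivative ∂P_i/∂x_j is nonzero (coefficients being nonnegative). -/
def StronglyConnectedMPS {n : ℕ} (P : Fin n → MvPolynomial (Fin n) ℝ) : Prop :=
  ∀ i j : Fin n, Relation.ReflTransGen (fun a b => MvPolynomial.pderiv b (P a) ≠ 0) i j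

variable {n : ℕ}

lemma pow_taylor {a b : ℝ} (ha : 0 ≤ a) (hab : a ≤ b) (k : ℕ) :
    ((k+1 : ℕ) : ℝ) * a ^ k * (b - a) ≤ b ^ (k+1) - a ^ (k+1) := by
  induction k with
  | zero => simp
  | succ k ih =>
    have h3 : a * (((k+1:ℕ):ℝ) * a ^ k * (b - a)) ≤ a * (b ^ (k+1) - a ^ (k+1)) :=
      mul_le_mul_of_nonneg_left ih ha
    have h1 : a ^ (k+1) ≤ b ^ (k+1) := pow_le_pow_left₀ ha hab (k+1)
    have h4 : a * (b ^ (k+1) - a ^ (k+1)) ≤ b * (b ^ (k+1) - a ^ (k+1)) :=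
      mul_le_mul_of_nonneg_right hab (by linarith)
    have hX : 0 ≤ a ^ (k+1) * (b - a) :=
      mul_nonneg (pow_nonneg ha (k+1)) (by linarith)
    have h5 : ((k:ℝ) + 1) * a ^ (k+1) * (b - a) ≤ a * (b ^ (k+1) - a ^ (k+1)) := by
      calc ((k:ℝ) + 1) * a ^ (k+1) * (b - a) = a * (((k:ℕ):ℝ) + 1) * a ^ k * (b - a) := by
            ring
        _ = a * ((((k+1:ℕ)):ℝ) * a ^ k * (b - a)) := by push_cast; ring
        _ ≤ _ := h3
    have e : b ^ (k+1+1) - a ^ (k+1+1) = b * (b^(k+1) - a^(k+1)) + (b - a) * a^(k+1) := by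
      ring
    push_cast
    rw [e]
    linarith [h5, h4, hX]

lemma prod_taylor (f g : Fin n → ℝ) (hf : ∀ i, 0 ≤ f i) (hfg : ∀ i, f i ≤ g i)
    (s : Finset (Fin n)) :
    ∏ i ∈ s, f i + ∑ j ∈ s, (g j - f j) * ∏ i ∈ s \ {j}, f i ≤ ∏ i ∈ s, g i := by
  induction s using Finset.induction with
  | empty => simp
  | @insert a s ha ih =>
    have hprodf : 0 ≤ ∏ i ∈ s, f i := Finset.prod_nonneg fun i _ => hf i
    have hsum0 : 0 ≤ ∑ j ∈ s, (g j - f j) * ∏ i ∈ s \ {j}, f i :=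
      Finset.sum_nonneg fun j _ => mul_nonneg (by linarith [hfg j])
        (Finset.prod_nonneg fun i _ => hf i)
    have hga : 0 ≤ g a := le_trans (hf a) (hfg a)
    rw [Finset.prod_insert ha, Finset.prod_insert ha, Finset.sum_insert ha]
    have e1 : insert a s \ {a} = s := by
      rw [Finset.insert_sdiff_of_mem _ (Finset.mem_singleton_self a),
        Finset.sdiff_eq_self_iff_disjoint.mpr (Finset.disjoint_singleton_right.mpr ha)]
    have e2 : ∀ j ∈ s, (g j - f j) * ∏ i ∈ insert a s \ {j}, f i
        = f a * ((g j - f j) * ∏ i ∈ s \ {j}, f i) := by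
      intro j hj
      have haj : a ∉ s \ {j} := fun h => ha (Finset.mem_sdiff.mp h).1
      have : insert a s \ {j} = insert a (s \ {j}) := by
        rw [Finset.insert_sdiff_of_notMem]
        simp only [Finset.mem_singleton]
        rintro rfl; exact ha hj
      rw [this, Finset.prod_insert haj]; ring
    rw [Finset.sum_congr rfl e2, e1, ← Finset.mul_sum]
    have hfa : f a * ∑ j ∈ s, (g j - f j) * ∏ i ∈ s \ {j}, f i
        ≤ g a * ∑ j ∈ s, (g j - f j) * ∏ i ∈ s \ {j}, f i :=
      mul_le_mul_of_nonneg_right (hfg a) hsum0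
    have hih : g a * (∏ i ∈ s, f i + ∑ j ∈ s, (g j - f j) * ∏ i ∈ s \ {j}, f i)
        ≤ g a * ∏ i ∈ s, g i := mul_le_mul_of_nonneg_left ih hga
    nlinarith [hfg a, hprodf]

lemma eval_pderiv_eq (p : MvPolynomial (Fin n) ℝ) (x : Fin n → ℝ) (j : Fin n) :
    eval x (pderiv j p) =
      ∑ m ∈ p.support, (p.coeff m * (m j : ℝ)) *
        ∏ i, x i ^ (((m - Finsupp.single j 1) : Fin n →₀ ℕ) i) := by
  conv_lhs => rw [p.as_sum]
  rw [map_sum, map_sum]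
  refine Finset.sum_congr rfl fun m _ => ?_
  rw [pderiv_monomial, eval_monomial, Finsupp.prod_pow]

section mono
variable {p : MvPolynomial (Fin n) ℝ} (hp : ∀ m, 0 ≤ p.coeff m)
  {x y : Fin n → ℝ} (hx : ∀ i, 0 ≤ x i) (hxy : ∀ i, x i ≤ y i)

include hp hx in
lemma eval_nonneg' : 0 ≤ eval x p := by
  rw [eval_eq' x p]
  exact Finset.sum_nonneg fun m _ => mul_nonneg (hp m)
    (Finset.prod_nonneg fun i _ => pow_nonneg (hx i) _)

include hp hx hxy in
lemma eval_mono' : eval x p ≤ eval y p := by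
  rw [eval_eq' x p, eval_eq' y p]
  refine Finset.sum_le_sum fun m _ => mul_le_mul_of_nonneg_left
    (Finset.prod_le_prod (fun i _ => pow_nonneg (hx i) _)
      (fun i _ => pow_le_pow_left₀ (hx i) (hxy i) _)) (hp m)

include hp hx in
lemma eval_pderiv_nonneg' (j : Fin n) : 0 ≤ eval x (pderiv j p) := by
  rw [eval_pderiv_eq]
  exact Finset.sum_nonneg fun m _ => mul_nonneg (mul_nonneg (hp m) (Nat.cast_nonneg _))
    (Finset.prod_nonneg fun i _ => pow_nonneg (hx i) _)

include hp hx hxy in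
lemma eval_pderiv_mono' (j : Fin n) : eval x (pderiv j p) ≤ eval y (pderiv j p) := by
  rw [eval_pderiv_eq, eval_pderiv_eq]
  refine Finset.sum_le_sum fun m _ => mul_le_mul_of_nonneg_left
    (Finset.prod_le_prod (fun i _ => pow_nonneg (hx i) _)
      (fun i _ => pow_le_pow_left₀ (hx i) (hxy i) _))
    (mul_nonneg (hp m) (Nat.cast_nonneg _))

end mono

lemma continuous_mveval (p : MvPolynomial (Fin n) ℝ) :
    Continuous fun x : Fin n → ℝ => eval x p := by
  have : (fun x : Fin n → ℝ => eval x p)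
      = fun x => ∑ m ∈ p.support, p.coeff m * ∏ i, x i ^ m i :=
    funext fun x => eval_eq' x p
  rw [this]
  exact continuous_finset_sum _ fun m _ => continuous_const.mul
    (continuous_finset_prod _ fun i _ => (continuous_apply i).pow _)

lemma monomial_taylor (m : Fin n →₀ ℕ) {a b : Fin n → ℝ}
    (ha : ∀ i, 0 ≤ a i) (hab : ∀ i, a i ≤ b i) :
    ∏ i, a i ^ m i + ∑ j, (m j : ℝ) *
        (∏ i, a i ^ (((m - Finsupp.single j 1) : Fin n →₀ ℕ) i)) * (b j - a j)
      ≤ ∏ i, b i ^ m i := by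
  have hmain := prod_taylor (fun i => a i ^ m i) (fun i => b i ^ m i)
    (fun i => pow_nonneg (ha i) _) (fun i => pow_le_pow_left₀ (ha i) (hab i) _)
    Finset.univ
  have hterm : ∀ j : Fin n, (m j : ℝ) *
      (∏ i, a i ^ (((m - Finsupp.single j 1) : Fin n →₀ ℕ) i)) * (b j - a j)
      ≤ (b j ^ m j - a j ^ m j) * ∏ i ∈ Finset.univ \ {j}, a i ^ m i := by
    intro j
    rcases Nat.eq_zero_or_eq_succ_pred (m j) with hmj | hmj
    · simp [hmj]
    · set k := (m j).pred with hk
      have hQ : 0 ≤ ∏ i ∈ Finset.univ \ {j}, a i ^ m i :=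
        Finset.prod_nonneg fun i _ => pow_nonneg (ha i) _
      have hsplit : (∏ i, a i ^ (((m - Finsupp.single j 1) : Fin n →₀ ℕ) i))
          = a j ^ k * ∏ i ∈ Finset.univ \ {j}, a i ^ m i := by
        rw [Finset.prod_eq_mul_prod_sdiff_singleton_of_mem (Finset.mem_univ j)
          (fun i => a i ^ (((m - Finsupp.single j 1) : Fin n →₀ ℕ) i))]
        congr 1
        · rw [Finsupp.tsub_apply, Finsupp.single_eq_same, hmj]; rfl
        · refine Finset.prod_congr rfl fun i hi => ?_
          have hij : i ≠ j := (Finset.mem_sdiff.mp hi).2 ∘ Finset.mem_singleton.mpr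
          rw [Finsupp.tsub_apply, Finsupp.single_eq_of_ne hij]; rfl
      have hpow := pow_taylor (ha j) (hab j) k
      have h2 := mul_le_mul_of_nonneg_right hpow hQ
      rw [hsplit, hmj]
      calc ((k+1 : ℕ) : ℝ) * (a j ^ k * ∏ i ∈ Finset.univ \ {j}, a i ^ m i) * (b j - a j)
          = ((k+1 : ℕ) : ℝ) * a j ^ k * (b j - a j) * ∏ i ∈ Finset.univ \ {j}, a i ^ m i := by
            ring
        _ ≤ (b j ^ (k+1) - a j ^ (k+1)) * ∏ i ∈ Finset.univ \ {j}, a i ^ m i := h2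
  have hsum := Finset.sum_le_sum (fun j (_ : j ∈ Finset.univ) => hterm j)
  calc ∏ i, a i ^ m i + ∑ j, (m j : ℝ) *
        (∏ i, a i ^ (((m - Finsupp.single j 1) : Fin n →₀ ℕ) i)) * (b j - a j)
      ≤ ∏ i, a i ^ m i
        + ∑ j, (b j ^ m j - a j ^ m j) * ∏ i ∈ Finset.univ \ {j}, a i ^ m i := by
        linarith
    _ ≤ ∏ i, b i ^ m i := hmain

lemma taylor_lb (p : MvPolynomial (Fin n) ℝ) (hp : ∀ m, 0 ≤ p.coeff m)
    {a b : Fin n → ℝ} (ha : ∀ i, 0 ≤ a i) (hab : ∀ i, a i ≤ b i) :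
    eval a p + ∑ j, eval a (pderiv j p) * (b j - a j) ≤ eval b p := by
  rw [eval_eq' a p, eval_eq' b p]
  simp_rw [eval_pderiv_eq, Finset.sum_mul]
  rw [Finset.sum_comm, ← Finset.sum_add_distrib]
  refine Finset.sum_le_sum fun m _ => ?_
  have h1 := monomial_taylor (n := n) m ha hab
  have h2 := mul_le_mul_of_nonneg_left h1 (hp m)
  calc p.coeff m * ∏ i, a i ^ m i
        + ∑ j, p.coeff m * (m j : ℝ) *
            (∏ i, a i ^ (((m - Finsupp.single j 1) : Fin n →₀ ℕ) i)) * (b j - a j)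
      = p.coeff m * (∏ i, a i ^ m i + ∑ j, (m j : ℝ) *
            (∏ i, a i ^ (((m - Finsupp.single j 1) : Fin n →₀ ℕ) i)) * (b j - a j)) := by
        rw [mul_add, Finset.mul_sum]
        refine congrArg _ (Finset.sum_congr rfl fun j _ => by ring)
    _ ≤ p.coeff m * ∏ i, b i ^ m i := h2

lemma exists_eigvec (A : Matrix (Fin n) (Fin n) ℝ) (hA : ∀ i j, 0 ≤ A i j)
    {c : ℝ} (hc : 0 < c) (hspec : ENNReal.ofReal c ≤ specRad A) :
    ∃ v : Fin n → ℝ, (∀ i, 0 ≤ v i) ∧ v ≠ 0 ∧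
      ∀ i, c * v i ≤ ∑ j, A i j * v j := by
  set M := A.map (algebraMap ℝ ℂ) with hM
  have hfin : (spectrum ℂ M).Finite := Matrix.finite_spectrum M
  have hcpos : 0 < ENNReal.ofReal c := ENNReal.ofReal_pos.mpr hc
  have hne : (spectrum ℂ M).Nonempty := by
    by_contra h
    rw [Set.not_nonempty_iff_eq_empty] at h
    have h0 : specRad A = 0 := by
      rw [specRad, spectralRadius]
      rw [show spectrum ℂ M = ∅ from h]
      simp
    rw [h0] at hspec
    exact absurd (le_antisymm hspec zero_le) (ne_of_gt hcpos)
  obtain ⟨μ, hμσ, hμmax⟩ := Finset.exists_max_image hfin.toFinset (fun z => ‖z‖₊)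
    ((Set.Finite.toFinset_nonempty hfin).mpr hne)
  rw [Set.Finite.mem_toFinset] at hμσ
  have hrad : specRad A ≤ (‖μ‖₊ : ℝ≥0∞) := by
    rw [specRad, spectralRadius]
    refine iSup₂_le fun k hk => ?_
    have := hμmax k ((Set.Finite.mem_toFinset hfin).mpr hk)
    exact_mod_cast ENNReal.coe_le_coe.mpr this
  have hcμ : c ≤ ‖μ‖ := by
    have h1 : ENNReal.ofReal c ≤ (‖μ‖₊ : ℝ≥0∞) := le_trans hspec hrad
    rw [← ENNReal.ofReal_coe_nnreal,
      ENNReal.ofReal_le_ofReal_iff (NNReal.coe_nonneg _)] at h1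
    simpa [coe_nnnorm] using h1
  have hnu : ¬IsUnit (algebraMap ℂ (Matrix (Fin n) (Fin n) ℂ) μ - M) :=
    spectrum.mem_iff.mp hμσ
  rw [Matrix.isUnit_iff_isUnit_det, isUnit_iff_ne_zero, ne_eq, not_not] at hnu
  obtain ⟨w, hw0, hw⟩ := (Matrix.exists_mulVec_eq_zero_iff).mpr hnu
  have hMw : M.mulVec w = μ • w := by
    have h1 : (algebraMap ℂ (Matrix (Fin n) (Fin n) ℂ) μ - M).mulVec w
        = (algebraMap ℂ (Matrix (Fin n) (Fin n) ℂ) μ).mulVec w - M.mulVec w :=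
      Matrix.sub_mulVec _ _ _
    have h2 : (algebraMap ℂ (Matrix (Fin n) (Fin n) ℂ) μ).mulVec w = μ • w := by
      rw [Algebra.algebraMap_eq_smul_one, Matrix.smul_mulVec, Matrix.one_mulVec]
    rw [hw, h2] at h1
    exact (sub_eq_zero.mp h1.symm).symm
  refine ⟨fun i => ‖w i‖, fun i => norm_nonneg _, ?_, ?_⟩
  · intro h
    apply hw0
    funext i
    have := congrFun h i
    simpa using this
  · intro i
    have hwi : M.mulVec w i = μ * w i := by rw [hMw]; rfl
    have hsum : M.mulVec w i = ∑ j, (A i j : ℂ) * w j := by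
      simp [Matrix.mulVec, dotProduct, hM, Matrix.map_apply]
    calc c * ‖w i‖ ≤ ‖μ‖ * ‖w i‖ :=
          mul_le_mul_of_nonneg_right hcμ (norm_nonneg _)
      _ = ‖μ * w i‖ := (norm_mul μ (w i)).symm
      _ = ‖∑ j, (A i j : ℂ) * w j‖ := by rw [← hwi, hsum]
      _ ≤ ∑ j, ‖(A i j : ℂ) * w j‖ := norm_sum_le _ _
      _ = ∑ j, A i j * ‖w j‖ := by
          refine Finset.sum_congr rfl fun j _ => ?_
          rw [norm_mul, Complex.norm_real, Real.norm_eq_abs, abs_of_nonneg (hA i j)]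

lemma exists_fixpoint_le (P : Fin n → MvPolynomial (Fin n) ℝ)
    (hpos : ∀ i m, 0 ≤ (P i).coeff m) (z : Fin n → ℝ)
    (hz0 : ∀ i, 0 ≤ z i) (hz : ∀ i, evalVec P z i ≤ z i) :
    ∃ r : Fin n → ℝ, 0 ≤ r ∧ evalVec P r = r ∧ r ≤ z := by
  set s : ℕ → Fin n → ℝ := fun k => (evalVec P)^[k] z with hs
  have hsucc : ∀ k, s (k+1) = evalVec P (s k) := fun k =>
    Function.iterate_succ_apply' (evalVec P) k z
  have h0 : ∀ k i, 0 ≤ s k i := by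
    intro k
    induction k with
    | zero => exact hz0
    | succ k ih =>
      intro i
      rw [hsucc]
      exact eval_nonneg' (hpos i) ih
  have hmono : ∀ k i, s (k+1) i ≤ s k i := by
    intro k
    induction k with
    | zero => exact hz
    | succ k ih =>
      intro i
      rw [hsucc (k+1)]
      calc evalVec P (s (k+1)) i ≤ evalVec P (s k) i :=
            eval_mono' (hpos i) (h0 (k+1)) ih
        _ = s (k+1) i := (congrFun (hsucc k) i).symm
  have hant : ∀ i, Antitone fun k => s k i := fun i =>
    antitone_nat_of_succ_le fun k => hmono k i
  have hbdd : ∀ i, BddBelow (Set.range fun k => s k i) :=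
    fun i => ⟨0, fun x ⟨k, hk⟩ => hk ▸ h0 k i⟩
  set L : Fin n → ℝ := fun i => ⨅ k, s k i with hL
  have htend : ∀ i, Filter.Tendsto (fun k => s k i) Filter.atTop (nhds (L i)) :=
    fun i => tendsto_atTop_ciInf (hant i) (hbdd i)
  have htendL : Filter.Tendsto s Filter.atTop (nhds L) :=
    tendsto_pi_nhds.mpr htend
  have hfixL : evalVec P L = L := by
    funext i
    have h1 : Filter.Tendsto (fun k => eval (s k) (P i)) Filter.atTop
        (nhds (eval L (P i))) := ((continuous_mveval (P i)).tendsto L).comp htendL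
    have h2 : (fun k => eval (s k) (P i)) = fun k => s (k+1) i := by
      funext k; rw [hsucc]; rfl
    have h3 : Filter.Tendsto (fun k => s (k+1) i) Filter.atTop (nhds (L i)) :=
      (htend i).comp (Filter.tendsto_add_atTop_nat 1)
    rw [h2] at h1
    exact tendsto_nhds_unique h1 h3
  refine ⟨L, fun i => le_ciInf fun k => h0 k i, hfixL, fun i => ?_⟩
  exact (ciInf_le (hbdd i) 0).trans (le_of_eq rfl)

theorem stmt4 {n : ℕ} (P : Fin n → MvPolynomial (Fin n) ℝ)
    (hpos : ∀ i m, 0 ≤ (P i).coeff m)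
    (hsc : StronglyConnectedMPS P)
    (q : Fin n → ℝ) (hq : ∀ i, 0 < q i) (hfix : evalVec P q = q)
    (hleast : ∀ r : Fin n → ℝ, 0 ≤ r → evalVec P r = r → q ≤ r) :
    specRad (jacob P q) ≤ 1 ∧
      ∀ y : Fin n → ℝ, 0 ≤ y → (∀ i, y i < q i) → specRad (jacob P y) < 1 := by
  have hq0 : ∀ i, 0 ≤ q i := fun i => (hq i).le
  have hfix' : ∀ i, eval q (P i) = q i := fun i => congrFun hfix i
  have jac_apply : ∀ (x : Fin n → ℝ) i j, jacob P x i j = eval x (pderiv j (P i)) :=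
    fun x i j => rfl
  have descent : ∀ z : Fin n → ℝ, (∀ i, 0 ≤ z i) → (∀ i, eval z (P i) ≤ z i) →
      ∀ i, q i ≤ z i := by
    intro z hz0 hz
    obtain ⟨r, hr0, hrfix, hrz⟩ := exists_fixpoint_le P hpos z hz0 hz
    exact fun i => le_trans (hleast r hr0 hrfix i) (hrz i)
  constructor
  · by_contra h1
    rw [not_le] at h1
    obtain ⟨c, hc1, hc2⟩ := ENNReal.lt_iff_exists_nnreal_btwn.mp h1
    have hcc : (1:ℝ) < (c:ℝ) := by exact_mod_cast hc1
    have hAq : ∀ i j, 0 ≤ jacob P q i j := fun i j =>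
      (jac_apply q i j) ▸ eval_pderiv_nonneg' (hpos i) hq0 j
    obtain ⟨v, hv0, hvne, hvA⟩ := exists_eigvec (jacob P q) hAq (c := (c:ℝ))
      (lt_trans one_pos hcc)
      (by rw [ENNReal.ofReal_coe_nnreal]; exact hc2.le)
    -- g ε i = row i of B(q - εv) applied to v
    set g : ℝ → Fin n → ℝ := fun ε i =>
      ∑ j, eval (fun k => q k - ε * v k) (pderiv j (P i)) * v j with hg
    have hgzero : ∀ i, g 0 i = ∑ j, eval q (pderiv j (P i)) * v j := by
      intro i
      have : (fun k => q k - (0:ℝ) * v k) = q := by funext k; ring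
      rw [hg]; simp only [this]
    have hcont : ∀ i, Continuous fun ε => g ε i := by
      intro i
      refine continuous_finset_sum _ fun j _ => (Continuous.mul ?_ continuous_const)
      exact (continuous_mveval (pderiv j (P i))).comp
        (continuous_pi fun k => continuous_const.sub (continuous_id.mul continuous_const))
    have hev1 : ∀ i, ∀ᶠ ε in nhds (0:ℝ), 0 < v i → v i < g ε i := by
      intro i
      by_cases hvi : 0 < v i
      · have hgt : v i < g 0 i := by
          rw [hgzero i]
          calc v i < (c:ℝ) * v i := by nlinarith
            _ ≤ ∑ j, jacob P q i j * v j := hvA i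
            _ = ∑ j, eval q (pderiv j (P i)) * v j := by
                exact Finset.sum_congr rfl fun j _ => by rw [jac_apply]
        filter_upwards [((hcont i).tendsto 0).eventually (lt_mem_nhds hgt)] with ε h _
        exact h
      · exact Filter.Eventually.of_forall fun ε h => absurd h hvi
    have hev2 : ∀ i, ∀ᶠ ε in nhds (0:ℝ), ε * v i < q i := by
      intro i
      have ht : Filter.Tendsto (fun ε : ℝ => ε * v i) (nhds 0) (nhds 0) := by
        have := (continuous_id.mul (continuous_const (y := v i))).tendsto (0:ℝ)
        simpa [Pi.mul_def] using this
      exact ht.eventually (gt_mem_nhds (hq i))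
    have hev : ∀ᶠ ε in nhds (0:ℝ), ∀ i, (0 < v i → v i < g ε i) ∧ ε * v i < q i :=
      Filter.eventually_all.mpr fun i => (hev1 i).and (hev2 i)
    have hev' : ∀ᶠ ε in nhdsWithin (0:ℝ) (Set.Ioi 0),
        ∀ i, (0 < v i → v i < g ε i) ∧ ε * v i < q i :=
      hev.filter_mono nhdsWithin_le_nhds
    obtain ⟨ε, hεQ, hεpos⟩ := (hev'.and self_mem_nhdsWithin).exists
    set z : Fin n → ℝ := fun k => q k - ε * v k with hzdef
    have hz0 : ∀ i, 0 ≤ z i := fun i => by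
      have := (hεQ i).2; simp only [hzdef]; linarith
    have hzq : ∀ i, z i ≤ q i := fun i => by
      have : 0 ≤ ε * v i := mul_nonneg hεpos.le (hv0 i)
      simp only [hzdef]; linarith
    have hPz : ∀ i, eval z (P i) ≤ z i := by
      intro i
      have htay := taylor_lb (P i) (hpos i) hz0 hzq
      have hqz : ∀ j, q j - z j = ε * v j := fun j => by simp [hzdef]
      have hsumeq : ∑ j, eval z (pderiv j (P i)) * (q j - z j) = ε * g ε i := by
        rw [hg, Finset.mul_sum]
        exact Finset.sum_congr rfl fun j _ => by rw [hqz j]; ring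
      rw [hsumeq, hfix' i] at htay
      by_cases hvi : 0 < v i
      · have hgi : v i < g ε i := (hεQ i).1 hvi
        have : ε * v i ≤ ε * g ε i := mul_le_mul_of_nonneg_left hgi.le hεpos.le
        simp only [hzdef]
        linarith
      · have hvi0 : v i = 0 := le_antisymm (not_lt.mp hvi) (hv0 i)
        have hgnn : 0 ≤ g ε i := Finset.sum_nonneg fun j _ =>
          mul_nonneg (eval_pderiv_nonneg' (hpos i) hz0 j) (hv0 j)
        have : 0 ≤ ε * g ε i := mul_nonneg hεpos.le hgnn
        simp only [hzdef, hvi0]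
        linarith
    have hqz := descent z hz0 hPz
    have hv00 : ∀ i, v i = 0 := by
      intro i
      have h1 := hqz i
      simp only [hzdef] at h1
      have h2 : ε * v i ≤ 0 := by linarith
      have := hv0 i
      nlinarith [hεpos]
    exact hvne (funext fun i => hv00 i)
  · intro y hy0 hylt
    by_contra h2
    rw [not_lt] at h2
    have hy0' : ∀ i, 0 ≤ y i := fun i => hy0 i
    have hAy : ∀ i j, 0 ≤ jacob P y i j := fun i j =>
      (jac_apply y i j) ▸ eval_pderiv_nonneg' (hpos i) hy0' j
    obtain ⟨v, hv0, hvne, hvA⟩ := exists_eigvec (jacob P y) hAy (c := (1:ℝ)) one_pos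
      (by rw [ENNReal.ofReal_one]; exact h2)
    obtain ⟨i0, hi0⟩ := Function.ne_iff.mp hvne
    have hi0' : 0 < v i0 := lt_of_le_of_ne (hv0 i0) (Ne.symm (by simpa using hi0))
    obtain ⟨jm, _, hjm⟩ := Finset.exists_max_image Finset.univ v ⟨i0, Finset.mem_univ _⟩
    have hjm0 : 0 < v jm := lt_of_lt_of_le hi0' (hjm i0 (Finset.mem_univ _))
    obtain ⟨im, _, him⟩ := Finset.exists_min_image Finset.univ (fun i => q i - y i)
      ⟨i0, Finset.mem_univ _⟩
    have hd0 : 0 < q im - y im := sub_pos.mpr (hylt im)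
    set ε : ℝ := (q im - y im) / v jm with hεdef
    have hεpos : 0 < ε := div_pos hd0 hjm0
    have hεv : ∀ j, ε * v j ≤ q j - y j := by
      intro j
      calc ε * v j ≤ ε * v jm :=
            mul_le_mul_of_nonneg_left (hjm j (Finset.mem_univ _)) hεpos.le
        _ = q im - y im := div_mul_cancel₀ _ (ne_of_gt hjm0)
        _ ≤ q j - y j := him j (Finset.mem_univ _)
    set z : Fin n → ℝ := fun k => q k - ε * v k with hzdef
    have hyz : ∀ i, y i ≤ z i := fun i => by
      have := hεv i; simp only [hzdef]; linarith
    have hz0 : ∀ i, 0 ≤ z i := fun i => le_trans (hy0' i) (hyz i)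
    have hzq : ∀ i, z i ≤ q i := fun i => by
      have : 0 ≤ ε * v i := mul_nonneg hεpos.le (hv0 i)
      simp only [hzdef]; linarith
    have hPz : ∀ i, eval z (P i) ≤ z i := by
      intro i
      have htay := taylor_lb (P i) (hpos i) hz0 hzq
      rw [hfix' i] at htay
      have hstep : ∀ j, eval y (pderiv j (P i)) * (ε * v j)
          ≤ eval z (pderiv j (P i)) * (q j - z j) := by
        intro j
        have hqz : q j - z j = ε * v j := by simp [hzdef]
        rw [hqz]
        exact mul_le_mul_of_nonneg_right
          (eval_pderiv_mono' (hpos i) hy0' hyz j)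
          (mul_nonneg hεpos.le (hv0 j))
      have hlow : ε * v i ≤ ∑ j, eval z (pderiv j (P i)) * (q j - z j) := by
        calc ε * v i = ε * (1 * v i) := by ring
          _ ≤ ε * ∑ j, jacob P y i j * v j :=
              mul_le_mul_of_nonneg_left (hvA i) hεpos.le
          _ = ∑ j, eval y (pderiv j (P i)) * (ε * v j) := by
              rw [Finset.mul_sum]
              exact Finset.sum_congr rfl fun j _ => by rw [jac_apply]; ring
          _ ≤ ∑ j, eval z (pderiv j (P i)) * (q j - z j) :=
              Finset.sum_le_sum fun j _ => hstep j
      simp only [hzdef]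
      simp only [hzdef] at htay hlow
      linarith
    have hqz := descent z hz0 hPz
    have hv00 : ∀ i, v i = 0 := by
      intro i
      have h1 := hqz i
      simp only [hzdef] at h1
      have := hv0 i
      nlinarith [hεpos]
    exact hvne (funext fun i => hv00 i)
end

section
/- Let A ∈ ℝ^{n×n}_{≥0} and b ∈ ℝ^n_{≥0} be such that (I−A)^{−1} = Σ_{k=0}^∞ A^k (the Neumann series converges), (I−A)^{−1} b ≤ 1 (the all-ones vector), A is irreducible with smallest nonzero entry c > 0, b ≠ 0, and p > 0 is the largest entry of b. Then ‖(I−A)^{−1}‖_∞ ≤ n / (p · c^n). -/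
open Matrix

/-- `relPow r ℓ i j` means there is a path of length `ℓ` from `i` to `j` along `r`. -/
def relPow {α : Type*} (r : α → α → Prop) : ℕ → α → α → Prop
  | 0 => Eq
  | (m+1) => fun i j => ∃ k, relPow r m i k ∧ r k j

lemma relPow_trans {α : Type*} {r : α → α → Prop} :
    ∀ {b : ℕ} {a : ℕ} {i k j : α}, relPow r a i k → relPow r b k j → relPow r (a + b) i j
  | 0, a, i, k, j, h1, h2 => by cases h2; exact h1
  | (m+1), a, i, k, j, h1, h2 => by
      obtain ⟨s, hs, hr⟩ := h2
      exact ⟨s, relPow_trans h1 hs, hr⟩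

lemma reach_bounded {n : ℕ} (r : Fin n → Fin n → Prop) (i j : Fin n)
    (h : Relation.ReflTransGen r i j) : ∃ ℓ ≤ n, relPow r ℓ i j := by
  classical
  set F : Finset (Fin n) → Finset (Fin n) :=
    fun S => Finset.univ.filter (fun k => k ∈ S ∨ ∃ s ∈ S, r s k) with hF
  have hsub : ∀ S, S ⊆ F S := by
    intro S x hx; simp only [hF, Finset.mem_filter, Finset.mem_univ, true_and]; exact Or.inl hx
  have hmem : ∀ m k, k ∈ F^[m] {i} → ∃ ℓ ≤ m, relPow r ℓ i k := by
    intro m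
    induction m with
    | zero => intro k hk; simp at hk; exact ⟨0, le_refl _, hk.symm⟩
    | succ m ih =>
      intro k hk
      rw [Function.iterate_succ_apply'] at hk
      simp only [hF, Finset.mem_filter, Finset.mem_univ, true_and] at hk
      rcases hk with hk | ⟨s, hs, hrs⟩
      · obtain ⟨ℓ, hℓ, hp⟩ := ih k hk
        exact ⟨ℓ, hℓ.trans (Nat.le_succ m), hp⟩
      · obtain ⟨ℓ, hℓ, hp⟩ := ih s hs
        exact ⟨ℓ + 1, Nat.succ_le_succ hℓ, ⟨s, hp, hrs⟩⟩
  have hiter_sub : ∀ m, ({i} : Finset (Fin n)) ⊆ F^[m] {i} := by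
    intro m
    induction m with
    | zero => simp
    | succ m ih =>
      rw [Function.iterate_succ_apply']
      exact ih.trans (hsub _)
  have key : ∀ m, (m + 1 ≤ (F^[m] ({i} : Finset (Fin n))).card) ∨
      (∀ k, Relation.ReflTransGen r i k → k ∈ F^[m] {i}) := by
    intro m
    induction m with
    | zero => left; simp
    | succ m ih =>
      rcases ih with h1 | h2
      · by_cases heq : F (F^[m] ({i} : Finset (Fin n))) = F^[m] {i}
        · right
          intro k hk
          rw [Function.iterate_succ_apply', heq]
          induction hk with
          | refl => exact hiter_sub m (Finset.mem_singleton_self i)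
          | tail hab hbc ihk =>
            rw [← heq]
            simp only [hF, Finset.mem_filter, Finset.mem_univ, true_and]
            exact Or.inr ⟨_, ihk, hbc⟩
        · left
          rw [Function.iterate_succ_apply']
          have hss : F^[m] ({i} : Finset (Fin n)) ⊂ F (F^[m] {i}) :=
            (hsub _).ssubset_of_ne (Ne.symm heq)
          have := Finset.card_lt_card hss
          omega
      · right
        intro k hk
        rw [Function.iterate_succ_apply']
        exact hsub _ (h2 k hk)
  rcases key n with h1 | h2
  · have hc : (F^[n] ({i} : Finset (Fin n))).card ≤ n := by
      simpa using Finset.card_le_univ (F^[n] ({i} : Finset (Fin n)))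
    omega
  · exact hmem n j (h2 j h)

theorem stmt5 {n : ℕ} (hn : 0 < n) (A : Matrix (Fin n) (Fin n) ℝ)
    (hA : ∀ i j, 0 ≤ A i j) (hirr : MatIrreducible A)
    (hsum : Summable (fun k : ℕ => A ^ k))
    (hunit : IsUnit (1 - A).det)
    (hneu : ∑' k : ℕ, A ^ k = (1 - A)⁻¹)
    (b : Fin n → ℝ) (hb : 0 ≤ b) (hb0 : b ≠ 0)
    (hle : (1 - A)⁻¹ *ᵥ b ≤ 1)
    (c : ℝ) (hc : 0 < c) (hcmin : ∀ i j, A i j ≠ 0 → c ≤ A i j)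
    (hcex : ∃ i j, A i j = c ∧ A i j ≠ 0)
    (p : ℝ) (hp : 0 < p) (hpmax : ∀ i, b i ≤ p) (hpex : ∃ i, b i = p) :
    (⨆ i, ∑ j, |(1 - A)⁻¹ i j|) ≤ n / (p * c ^ n) := by
  classical
  set r : Fin n → Fin n → Prop := fun a b => 0 < A a b with hrdef
  have hApow : ∀ (k : ℕ) (i j : Fin n), 0 ≤ (A ^ k) i j := by
    intro k
    induction k with
    | zero =>
      intro i j; rw [pow_zero]
      by_cases h : i = j <;> simp [Matrix.one_apply, h]
    | succ k ih =>
      intro i j; rw [pow_succ, Matrix.mul_apply]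
      exact Finset.sum_nonneg fun s _ => mul_nonneg (ih i s) (hA s j)
  have hsum1 : ∀ i j, Summable (fun k : ℕ => (A ^ k) i j) := by
    intro i j
    exact (Pi.summable.mp ((Pi.summable.mp hsum) i)) j
  have hMentry : ∀ i j, (1 - A)⁻¹ i j = ∑' k : ℕ, (A ^ k) i j := by
    intro i j
    rw [← hneu]
    have h1 : (∑' k : ℕ, A ^ k) i = ∑' k : ℕ, (A ^ k) i := tsum_apply hsum
    rw [h1, tsum_apply (Pi.summable.mp hsum i)]
  have hM0 : ∀ i j, 0 ≤ (1 - A)⁻¹ i j := by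
    intro i j; rw [hMentry]
    exact tsum_nonneg fun k => hApow k i j
  -- power entry lower bound along paths
  have hpow_ge : ∀ (ℓ : ℕ) (i j : Fin n), relPow r ℓ i j → c ^ ℓ ≤ (A ^ ℓ) i j := by
    intro ℓ
    induction ℓ with
    | zero =>
      intro i j h
      cases h
      simp [Matrix.one_apply]
    | succ ℓ ih =>
      intro i j h
      obtain ⟨k, hk, hr⟩ := h
      have h1 : c ^ ℓ * c ≤ (A ^ ℓ) i k * A k j :=
        mul_le_mul (ih i k hk) (hcmin k j (ne_of_gt hr)) hc.le (hApow ℓ i k)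
      calc c ^ (ℓ + 1) = c ^ ℓ * c := by ring
        _ ≤ (A ^ ℓ) i k * A k j := h1
        _ ≤ ∑ s, (A ^ ℓ) i s * A s j :=
            Finset.single_le_sum (fun s _ => mul_nonneg (hApow ℓ i s) (hA s j))
              (Finset.mem_univ k)
        _ = (A ^ (ℓ + 1)) i j := by rw [pow_succ, Matrix.mul_apply]
  -- c ≤ 1
  have hcle1 : c ≤ 1 := by
    by_contra h1
    push_neg at h1
    obtain ⟨i, j, hij, hij0⟩ := hcex
    obtain ⟨ℓ, hℓ, hpathji⟩ := reach_bounded r j i (hirr j i)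
    have hrij : r i j := by rw [hrdef]; dsimp only; rw [hij]; exact hc
    have hLcyc : relPow r (ℓ + 1) j j := ⟨i, hpathji, hrij⟩
    have hcyc : ∀ k : ℕ, relPow r (k * (ℓ + 1)) j j := by
      intro k
      induction k with
      | zero => rw [Nat.zero_mul]; exact rfl
      | succ k ih =>
        have : (k + 1) * (ℓ + 1) = k * (ℓ + 1) + (ℓ + 1) := by ring
        rw [this]
        exact relPow_trans ih hLcyc
    have h2 : ∀ k : ℕ, (1 : ℝ) ≤ (A ^ (k * (ℓ + 1))) j j := by
      intro k
      calc (1 : ℝ) ≤ c ^ (k * (ℓ + 1)) := one_le_pow₀ h1.le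
        _ ≤ _ := hpow_ge _ j j (hcyc k)
    have hmono : Filter.Tendsto (fun k : ℕ => k * (ℓ + 1)) Filter.atTop Filter.atTop :=
      Filter.tendsto_atTop_mono (fun k => Nat.le_mul_of_pos_right k (Nat.succ_pos ℓ))
        Filter.tendsto_id
    have htend : Filter.Tendsto (fun k : ℕ => (A ^ (k * (ℓ + 1))) j j)
        Filter.atTop (nhds 0) := ((hsum1 j j).tendsto_atTop_zero).comp hmono
    have : (1 : ℝ) ≤ 0 := ge_of_tendsto htend (Filter.Eventually.of_forall h2)
    linarith
  -- (1 - A)⁻¹ * A = M - 1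
  have hMA : (1 - A)⁻¹ * A = (1 - A)⁻¹ - 1 := by
    have h := Matrix.nonsing_inv_mul (1 - A) hunit
    rw [Matrix.mul_sub, Matrix.mul_one] at h
    have h2 : (1 : Matrix (Fin n) (Fin n) ℝ) + (1 - A)⁻¹ * A = (1 - A)⁻¹ :=
      (sub_eq_iff_eq_add.mp h).symm
    exact eq_sub_of_add_eq (by rw [add_comm]; exact h2)
  -- (1 - A)⁻¹ * A^ℓ ≤ M entrywise
  have hMAl : ∀ (ℓ : ℕ) (i j : Fin n), ((1 - A)⁻¹ * A ^ ℓ) i j ≤ (1 - A)⁻¹ i j := by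
    intro ℓ
    induction ℓ with
    | zero => intro i j; rw [pow_zero, Matrix.mul_one]
    | succ ℓ ih =>
      intro i j
      have hstep : ((1 - A)⁻¹ * A ^ (ℓ + 1)) i j ≤ ((1 - A)⁻¹ * A) i j := by
        rw [pow_succ, ← Matrix.mul_assoc, Matrix.mul_apply, Matrix.mul_apply]
        exact Finset.sum_le_sum fun k _ =>
          mul_le_mul_of_nonneg_right (ih i k) (hA k j)
      refine hstep.trans ?_
      rw [hMA, Matrix.sub_apply]
      have : (0 : ℝ) ≤ (1 : Matrix (Fin n) (Fin n) ℝ) i j := by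
        by_cases h : i = j <;> simp [Matrix.one_apply, h]
      linarith
  -- main entrywise bound
  obtain ⟨i0, hi0⟩ := hpex
  have hMtop : ∀ i j, (1 - A)⁻¹ i j ≤ 1 / (p * c ^ n) := by
    intro i j
    obtain ⟨ℓ, hℓn, hpath⟩ := reach_bounded r j i0 (hirr j i0)
    have hAbj : p * c ^ n ≤ (A ^ ℓ *ᵥ b) j := by
      have h1 : c ^ n ≤ c ^ ℓ := pow_le_pow_of_le_one hc.le hcle1 hℓn
      calc p * c ^ n ≤ (A ^ ℓ) j i0 * b i0 := by
            rw [hi0, mul_comm]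
            exact mul_le_mul (h1.trans (hpow_ge ℓ j i0 hpath)) le_rfl hp.le
              (hApow ℓ j i0)
        _ ≤ ∑ k, (A ^ ℓ) j k * b k :=
            Finset.single_le_sum (fun k _ => mul_nonneg (hApow ℓ j k) (hb k))
              (Finset.mem_univ i0)
        _ = (A ^ ℓ *ᵥ b) j := rfl
    have hAb0 : ∀ k, 0 ≤ (A ^ ℓ *ᵥ b) k := by
      intro k
      show (0:ℝ) ≤ ∑ s, (A ^ ℓ) k s * b s
      exact Finset.sum_nonneg fun s _ => mul_nonneg (hApow ℓ k s) (hb s)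
    have key : (1 - A)⁻¹ i j * (p * c ^ n) ≤ 1 := by
      calc (1 - A)⁻¹ i j * (p * c ^ n) ≤ (1 - A)⁻¹ i j * (A ^ ℓ *ᵥ b) j :=
            mul_le_mul_of_nonneg_left hAbj (hM0 i j)
        _ ≤ ∑ k, (1 - A)⁻¹ i k * (A ^ ℓ *ᵥ b) k :=
            Finset.single_le_sum (fun k _ => mul_nonneg (hM0 i k) (hAb0 k))
              (Finset.mem_univ j)
        _ = (((1 - A)⁻¹ * A ^ ℓ) *ᵥ b) i := by
            rw [← Matrix.mulVec_mulVec]; rfl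
        _ = ∑ k, ((1 - A)⁻¹ * A ^ ℓ) i k * b k := rfl
        _ ≤ ∑ k, (1 - A)⁻¹ i k * b k :=
            Finset.sum_le_sum fun k _ =>
              mul_le_mul_of_nonneg_right (hMAl ℓ i k) (hb k)
        _ = ((1 - A)⁻¹ *ᵥ b) i := rfl
        _ ≤ 1 := hle i
    have hpos : 0 < p * c ^ n := mul_pos hp (pow_pos hc n)
    rw [le_div_iff₀ hpos]
    exact key
  have : Nonempty (Fin n) := Fin.pos_iff_nonempty.mp hn
  apply ciSup_le
  intro i
  calc ∑ j, |(1 - A)⁻¹ i j| = ∑ j, (1 - A)⁻¹ i j :=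
        Finset.sum_congr rfl fun j _ => abs_of_nonneg (hM0 i j)
    _ ≤ ∑ _j : Fin n, 1 / (p * c ^ n) := Finset.sum_le_sum fun j _ => hMtop i j
    _ = n * (1 / (p * c ^ n)) := by
        rw [Finset.sum_const, Finset.card_univ, Fintype.card_fin, nsmul_eq_mul]
    _ = n / (p * c ^ n) := by ring
end

section
/- Let x = P(x) be an MPS in n variables with least fixed point q* > 0. Then P^n(0) > 0, i.e., after n iterations of value iteration starting from the zero vector, every coordinate is strictly positive. -/
open Matrix MvPolynomial

private lemma stmt8_eval_nonneg {n : ℕ} (p : MvPolynomial (Fin n) ℝ)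
    (hp : ∀ m, 0 ≤ p.coeff m) {a : Fin n → ℝ} (ha : 0 ≤ a) : 0 ≤ MvPolynomial.eval a p := by
  rw [MvPolynomial.eval_eq]
  exact Finset.sum_nonneg fun m _ =>
    mul_nonneg (hp m) (Finset.prod_nonneg fun j _ => pow_nonneg (ha j) _)

private lemma stmt8_eval_mono {n : ℕ} (p : MvPolynomial (Fin n) ℝ)
    (hp : ∀ m, 0 ≤ p.coeff m) {a b : Fin n → ℝ} (ha : 0 ≤ a) (hab : a ≤ b) :
    MvPolynomial.eval a p ≤ MvPolynomial.eval b p := by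
  rw [MvPolynomial.eval_eq, MvPolynomial.eval_eq]
  refine Finset.sum_le_sum fun m _ => mul_le_mul_of_nonneg_left ?_ (hp m)
  exact Finset.prod_le_prod (fun j _ => pow_nonneg (ha j) _)
    (fun j _ => pow_le_pow_left₀ (ha j) (hab j) _)

private lemma stmt8_eval_zero_of {n : ℕ} (p : MvPolynomial (Fin n) ℝ)
    (hp : ∀ m, 0 ≤ p.coeff m) {a b : Fin n → ℝ} (ha : 0 ≤ a)
    (hev : MvPolynomial.eval a p = 0) (hsupp : ∀ j, a j = 0 → b j = 0) :
    MvPolynomial.eval b p = 0 := by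
  rw [MvPolynomial.eval_eq] at hev ⊢
  have hterm : ∀ m ∈ p.support, p.coeff m * ∏ j ∈ m.support, a j ^ m j = 0 :=
    (Finset.sum_eq_zero_iff_of_nonneg (fun m _ =>
      mul_nonneg (hp m) (Finset.prod_nonneg fun j _ => pow_nonneg (ha j) _))).1 hev
  refine Finset.sum_eq_zero fun m hm => ?_
  have hc : p.coeff m ≠ 0 := MvPolynomial.mem_support_iff.1 hm
  have hprod : ∏ j ∈ m.support, a j ^ m j = 0 := by
    rcases mul_eq_zero.1 (hterm m hm) with h | h
    · exact absurd h hc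
    · exact h
  obtain ⟨j, hjmem, hj⟩ := Finset.prod_eq_zero_iff.1 hprod
  have hmj : m j ≠ 0 := by
    intro h0
    rw [h0, pow_zero] at hj
    exact one_ne_zero hj
  have haj : a j = 0 := by
    have := pow_eq_zero_iff hmj |>.1 hj
    exact this
  have hbj : b j = 0 := hsupp j haj
  have : b j ^ m j = 0 := by
    rw [hbj]
    exact zero_pow hmj
  rw [mul_eq_zero]
  right
  exact Finset.prod_eq_zero hjmem this

theorem stmt8 {n : ℕ} (P : Fin n → MvPolynomial (Fin n) ℝ)
    (hpos : ∀ i m, 0 ≤ (P i).coeff m)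
    (q : Fin n → ℝ) (hq : ∀ i, 0 < q i) (hfix : evalVec P q = q)
    (hleast : ∀ r : Fin n → ℝ, 0 ≤ r → evalVec P r = r → q ≤ r) :
    ∀ i, 0 < (evalVec P)^[n] 0 i := by
  classical
  set x : ℕ → Fin n → ℝ := fun k => (evalVec P)^[k] 0 with hxdef
  have hstep : ∀ k, x (k + 1) = evalVec P (x k) := fun k =>
    Function.iterate_succ_apply' (evalVec P) k 0
  have hx0 : x 0 = 0 := rfl
  have hxnn : ∀ k, (0 : Fin n → ℝ) ≤ x k := by
    intro k
    induction k with
    | zero => exact le_of_eq hx0.symm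
    | succ k ih =>
      rw [hstep]
      intro i
      exact stmt8_eval_nonneg (P i) (hpos i) ih
  have hmono1 : ∀ k, x k ≤ x (k + 1) := by
    intro k
    induction k with
    | zero => rw [hx0]; exact hxnn 1
    | succ k ih =>
      rw [hstep, hstep]
      intro i
      exact stmt8_eval_mono (P i) (hpos i) (hxnn k) ih
  have hmono : Monotone x := monotone_nat_of_le_succ hmono1
  have hle_q : ∀ k, x k ≤ q := by
    intro k
    induction k with
    | zero => rw [hx0]; intro i; exact (hq i).le
    | succ k ih =>
      rw [hstep]
      intro i
      calc MvPolynomial.eval (x k) (P i) ≤ MvPolynomial.eval q (P i) :=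
            stmt8_eval_mono (P i) (hpos i) (hxnn k) ih
        _ = q i := congrFun hfix i
  -- the limit r of the monotone bounded sequence x is a nonnegative fixed point
  set r : Fin n → ℝ := fun i => ⨆ k, x k i with hrdef
  have hbdd : ∀ i, BddAbove (Set.range fun k => x k i) := fun i =>
    ⟨q i, by rintro _ ⟨k, rfl⟩; exact hle_q k i⟩
  have htend : ∀ i, Filter.Tendsto (fun k => x k i) Filter.atTop (nhds (r i)) :=
    fun i => tendsto_atTop_ciSup (fun a b hab => hmono hab i) (hbdd i)
  have htendvec : Filter.Tendsto x Filter.atTop (nhds r) := tendsto_pi_nhds.2 htend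
  have hrfix : evalVec P r = r := by
    funext i
    have h1 : Filter.Tendsto (fun k => x (k + 1) i) Filter.atTop
        (nhds (MvPolynomial.eval r (P i))) := by
      have heq : (fun k => x (k + 1) i) = fun k => MvPolynomial.eval (x k) (P i) := by
        funext k; rw [hstep]; rfl
      rw [heq]
      exact ((MvPolynomial.continuous_eval (p := P i)).tendsto r).comp htendvec
    have h2 : Filter.Tendsto (fun k => x (k + 1) i) Filter.atTop (nhds (r i)) :=
      (htend i).comp (Filter.tendsto_add_atTop_nat 1)
    exact tendsto_nhds_unique h1 h2
  have hr0 : (0 : Fin n → ℝ) ≤ r := by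
    intro i
    have := le_ciSup (hbdd i) 0
    calc (0 : ℝ) = x 0 i := by rw [hx0]; rfl
      _ ≤ r i := le_ciSup (hbdd i) 0
  have hqr : q ≤ r := hleast r hr0 hrfix
  -- supports
  set S : ℕ → Finset (Fin n) := fun k => Finset.univ.filter (fun i => 0 < x k i) with hSdef
  have hmemS : ∀ k i, i ∈ S k ↔ 0 < x k i := by
    intro k i; simp [hSdef]
  have hSmono : ∀ k, S k ⊆ S (k + 1) := by
    intro k i hi
    rw [hmemS] at hi ⊢
    exact lt_of_lt_of_le hi (hmono1 k i)
  -- key: if the support stabilizes at step k, then x k is everywhere positive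
  have key : ∀ k, S (k + 1) = S k → ∀ j, 0 < x k j := by
    intro k hS j
    by_contra hcon
    have hxkj : x k j = 0 := le_antisymm (not_lt.1 hcon) (hxnn k j)
    have hall : ∀ m, k ≤ m → ∀ j', x k j' = 0 → x m j' = 0 := by
      intro m hm
      induction m, hm using Nat.le_induction with
      | base => intro j' hj'; exact hj'
      | succ m hm ih =>
        intro j' hj'
        have hj'succ : x (k + 1) j' = 0 := by
          have : j' ∉ S k := by
            rw [hmemS]
            intro h
            exact absurd hj' (ne_of_gt h)
          rw [← hS, hmemS] at this
          exact le_antisymm (not_lt.1 this) (hxnn (k + 1) j')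
        rw [hstep] at hj'succ ⊢
        exact stmt8_eval_zero_of (P j') (hpos j') (hxnn k) hj'succ (fun l hl => ih l hl)
    have hallm : ∀ m, x m j = 0 := by
      intro m
      rcases le_total m k with h | h
      · exact le_antisymm (le_of_le_of_eq (hmono h j) hxkj) (hxnn m j)
      · exact hall m h j hxkj
    have hrj : r j = 0 := by
      have : (fun m => x m j) = fun _ => (0 : ℝ) := funext hallm
      rw [hrdef]
      simp only [this]
      exact ciSup_const
    have := lt_of_lt_of_le (hq j) (hqr j)
    rw [hrj] at this
    exact absurd this (lt_irrefl 0)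
  by_cases hex : ∃ k < n, S (k + 1) = S k
  · obtain ⟨k, hk, hkS⟩ := hex
    intro i
    exact lt_of_lt_of_le (key k hkS i) (hmono hk.le i)
  · push_neg at hex
    have hcard : ∀ k, k ≤ n → k ≤ (S k).card := by
      intro k
      induction k with
      | zero => intro _; exact Nat.zero_le _
      | succ k ih =>
        intro hk
        have hk' : k ≤ n := Nat.le_of_succ_le hk
        have hlt : (S k).card < (S (k + 1)).card :=
          Finset.card_lt_card ⟨hSmono k, fun h => hex k (Nat.lt_of_succ_le hk)
            (Finset.Subset.antisymm h (hSmono k))⟩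
        exact Nat.succ_le_of_lt (lt_of_le_of_lt (ih hk') hlt)
    have hSn : S n = Finset.univ := by
      apply Finset.eq_univ_of_card
      have h1 : n ≤ (S n).card := hcard n le_rfl
      have h2 : (S n).card ≤ n := by
        calc (S n).card ≤ (Finset.univ : Finset (Fin n)).card := Finset.card_le_univ _
          _ = n := by simp
      simp [le_antisymm h2 h1]
    intro i
    have : i ∈ S n := by rw [hSn]; exact Finset.mem_univ i
    rw [hmemS] at this
    exact this
end

section
/- Let x = P(x) be a quadratic MPS in n variables with rational coefficients of total encoding size |P| bits and least fixed point q* > 0. Then q*_min ≥ 2^{−|P|(2^n − 1)}, where q*_min is the smallest coordinate of q*. -/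
open Matrix MvPolynomial Finset

lemma evalP_nonneg {n : ℕ} (p : MvPolynomial (Fin n) ℝ)
    (hpos : ∀ m, 0 ≤ p.coeff m) {x : Fin n → ℝ} (hx : 0 ≤ x) :
    0 ≤ eval x p := by
  rw [eval_eq]
  refine Finset.sum_nonneg fun d _ => mul_nonneg (hpos d) ?_
  exact Finset.prod_nonneg fun j _ => pow_nonneg (hx j) _

lemma evalP_mono {n : ℕ} (p : MvPolynomial (Fin n) ℝ)
    (hpos : ∀ m, 0 ≤ p.coeff m) {x y : Fin n → ℝ} (hx : 0 ≤ x) (hxy : x ≤ y) :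
    eval x p ≤ eval y p := by
  rw [eval_eq, eval_eq]
  refine Finset.sum_le_sum fun d _ => ?_
  refine mul_le_mul_of_nonneg_left ?_ (hpos d)
  refine Finset.prod_le_prod (fun j _ => pow_nonneg (hx j) _) fun j _ => ?_
  exact pow_le_pow_left₀ (hx j) (hxy j) _

lemma term_le_eval {n : ℕ} (p : MvPolynomial (Fin n) ℝ)
    (hpos : ∀ m, 0 ≤ p.coeff m) {x : Fin n → ℝ} (hx : 0 ≤ x)
    (m : Fin n →₀ ℕ) (hm : p.coeff m ≠ 0) :
    p.coeff m * ∏ j ∈ m.support, x j ^ m j ≤ eval x p := by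
  rw [eval_eq]
  refine Finset.single_le_sum (f := fun d => p.coeff d * ∏ j ∈ d.support, x j ^ d j)
    (fun d _ => mul_nonneg (hpos d) (Finset.prod_nonneg fun j _ => pow_nonneg (hx j) _)) ?_
  exact MvPolynomial.mem_support_iff.mpr hm

lemma kleene {n : ℕ} (P : Fin n → MvPolynomial (Fin n) ℝ)
    (hpos : ∀ i m, 0 ≤ (P i).coeff m)
    (q : Fin n → ℝ) (hleast : ∀ r : Fin n → ℝ, 0 ≤ r → evalVec P r = r → q ≤ r)
    (r : Fin n → ℝ) (hr : 0 ≤ r) (hpre : evalVec P r ≤ r) : q ≤ r := by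
  set F := evalVec P with hF
  have Fmono : ∀ {x y : Fin n → ℝ}, 0 ≤ x → x ≤ y → F x ≤ F y :=
    fun hx hxy i => evalP_mono (P _) (hpos _) hx hxy
  have Fnonneg : ∀ {x : Fin n → ℝ}, 0 ≤ x → 0 ≤ F x :=
    fun hx i => evalP_nonneg (P _) (hpos _) hx
  -- Kleene iteration
  let x : ℕ → Fin n → ℝ := fun k => F^[k] 0
  have hx0 : x 0 = 0 := rfl
  have hxs : ∀ k, x (k + 1) = F (x k) := fun k => Function.iterate_succ_apply' F k 0
  have hbnd : ∀ k, 0 ≤ x k ∧ x k ≤ r := by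
    intro k
    induction k with
    | zero => exact ⟨le_refl _, hr⟩
    | succ k ih =>
      rw [hxs]
      exact ⟨Fnonneg ih.1, le_trans (Fmono ih.1 ih.2) hpre⟩
  have hstep : ∀ k, x k ≤ x (k + 1) := by
    intro k
    induction k with
    | zero => rw [hxs, hx0]; exact Fnonneg (le_refl _)
    | succ k ih => rw [hxs, hxs]; exact Fmono (hbnd k).1 ih
  have hmono : Monotone x := monotone_nat_of_le_succ hstep
  have hmonoi : ∀ i, Monotone fun k => x k i := fun i a b hab => hmono hab i
  have hbddi : ∀ i, BddAbove (Set.range fun k => x k i) :=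
    fun i => ⟨r i, by rintro _ ⟨k, rfl⟩; exact (hbnd k).2 i⟩
  let L : Fin n → ℝ := fun i => ⨆ k, x k i
  have htendsto : ∀ i, Filter.Tendsto (fun k => x k i) Filter.atTop (nhds (L i)) :=
    fun i => tendsto_atTop_ciSup (hmonoi i) (hbddi i)
  have htendstoV : Filter.Tendsto x Filter.atTop (nhds L) :=
    tendsto_pi_nhds.mpr htendsto
  have hcont : Continuous F := by
    refine continuous_pi fun i => ?_
    exact MvPolynomial.continuous_eval (p := P i)
  have h1 : Filter.Tendsto (fun k => F (x k)) Filter.atTop (nhds (F L)) :=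
    (hcont.tendsto L).comp htendstoV
  have h2 : Filter.Tendsto (fun k => x (k + 1)) Filter.atTop (nhds L) :=
    htendstoV.comp (Filter.tendsto_add_atTop_nat 1)
  have hFL : F L = L := by
    refine tendsto_nhds_unique ?_ h2
    simpa only [hxs] using h1
  have hL0 : 0 ≤ L := fun i => le_trans (le_refl 0) <|
    le_ciSup_of_le (hbddi i) 0 (by exact (hbnd 0).1 i)
  have hLr : L ≤ r := fun i => ciSup_le fun k => (hbnd k).2 i
  exact le_trans (hleast L hL0 hFL) hLr

lemma exists_good {n : ℕ} (P : Fin n → MvPolynomial (Fin n) ℝ)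
    (hpos : ∀ i m, 0 ≤ (P i).coeff m)
    (q : Fin n → ℝ) (hq : ∀ i, 0 < q i) (hfix : evalVec P q = q)
    (hleast : ∀ r : Fin n → ℝ, 0 ≤ r → evalVec P r = r → q ≤ r)
    (S : Finset (Fin n)) (hS : S ≠ Finset.univ) :
    ∃ i ∉ S, ∃ m : Fin n →₀ ℕ, (P i).coeff m ≠ 0 ∧ ∀ j ∈ m.support, j ∈ S := by
  by_contra hcon
  push_neg at hcon
  set r : Fin n → ℝ := fun j => if j ∈ S then q j else 0 with hrdef
  have hr0 : 0 ≤ r := by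
    intro j; by_cases h : j ∈ S <;> simp [hrdef, h, (hq j).le]
  have hrq : r ≤ q := by
    intro j; by_cases h : j ∈ S <;> simp [hrdef, h, (hq j).le]
  have hpre : evalVec P r ≤ r := by
    intro i
    by_cases hi : i ∈ S
    · calc evalVec P r i ≤ evalVec P q i := evalP_mono (P i) (hpos i) hr0 hrq
        _ = q i := congrFun hfix i
        _ = r i := by simp [hrdef, hi]
    · have : evalVec P r i = 0 := by
        show eval r (P i) = 0
        rw [eval_eq]
        refine Finset.sum_eq_zero fun m hm => ?_
        have hcm : (P i).coeff m ≠ 0 := MvPolynomial.mem_support_iff.mp hm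
        obtain ⟨j, hjs, hjS⟩ := hcon i hi m hcm
        have : r j ^ m j = 0 := by
          rw [hrdef]; simp only [hjS, if_false]
          exact zero_pow (Finsupp.mem_support_iff.mp hjs)
        rw [Finset.prod_eq_zero hjs this, mul_zero]
      rw [this, hrdef]; simp [hi]
  have hqr := kleene P hpos q hleast r hr0 hpre
  obtain ⟨i, hi⟩ : ∃ i, i ∉ S := by
    by_contra h; push_neg at h
    exact hS (Finset.eq_univ_iff_forall.mpr h)
  have : q i ≤ 0 := by simpa [hrdef, hi] using hqr i
  exact absurd this (not_le.mpr (hq i))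

/-- A quadratic MPS with rational coefficients of total encoding size `s` bits
(in particular every positive coefficient is at least 2^(-s)) and LFP q* > 0 has
q*_min ≥ 2^(-s·(2^n - 1)). -/
theorem stmt9 {n : ℕ} (P : Fin n → MvPolynomial (Fin n) ℝ)
    (hdeg : ∀ i, (P i).totalDegree ≤ 2)
    (hpos : ∀ i m, 0 ≤ (P i).coeff m)
    (hrat : ∀ i m, ∃ r : ℚ, (P i).coeff m = (r : ℝ))
    (s : ℕ) (hs : 0 < s)
    (hsize : ∀ i m, (P i).coeff m ≠ 0 → (2 : ℝ) ^ (-(s : ℤ)) ≤ (P i).coeff m)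
    (q : Fin n → ℝ) (hq : ∀ i, 0 < q i) (hfix : evalVec P q = q)
    (hleast : ∀ r : Fin n → ℝ, 0 ≤ r → evalVec P r = r → q ≤ r) :
    ∀ i, (2 : ℝ) ^ (-((s : ℤ) * (2 ^ n - 1))) ≤ q i := by
  set c : ℝ := (2 : ℝ) ^ (-(s : ℤ)) with hcdef
  have hc0 : 0 < c := zpow_pos (by norm_num) _
  have hc1 : c ≤ 1 := by
    rw [hcdef]
    calc (2:ℝ) ^ (-(s:ℤ)) ≤ (2:ℝ) ^ (0:ℤ) := by
          apply zpow_le_zpow_right₀ (by norm_num) (by omega)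
      _ = 1 := zpow_zero 2
  have hq0 : (0 : Fin n → ℝ) ≤ q := fun i => (hq i).le
  have key : ∀ k : ℕ, ∃ S : Finset (Fin n),
      min k n ≤ S.card ∧ ∀ i ∈ S, c ^ (2 ^ k - 1) ≤ q i := by
    intro k
    induction k with
    | zero => exact ⟨∅, by simp, by simp⟩
    | succ k ih =>
      obtain ⟨S, hcard, hbound⟩ := ih
      have hcardn : S.card ≤ n := by
        simpa using Finset.card_le_univ S
      have hexp : 2 ^ k - 1 ≤ 2 ^ (k + 1) - 1 := by
        have := Nat.one_le_two_pow (n := k)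
        have h2 : 2 ^ k ≤ 2 ^ (k + 1) := Nat.pow_le_pow_right (by norm_num) (by omega)
        omega
      by_cases hn : n ≤ S.card
      · refine ⟨S, by omega, fun i hi => ?_⟩
        exact le_trans (pow_le_pow_of_le_one hc0.le hc1 hexp) (hbound i hi)
      · have hSne : S ≠ Finset.univ := by
          intro h
          rw [h] at hn
          simp at hn
        obtain ⟨i, hiS, m, hm0, hmS⟩ :=
          exists_good P hpos q hq hfix hleast S hSne
        set b : ℝ := c ^ (2 ^ k - 1) with hbdef
        have hb0 : 0 < b := pow_pos hc0 _
        have hb1 : b ≤ 1 := pow_le_one₀ hc0.le hc1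
        have hdegm : (m.sum fun _ e => e) ≤ 2 :=
          le_trans (le_totalDegree (MvPolynomial.mem_support_iff.mpr hm0)) (hdeg i)
        have hprod : b ^ 2 ≤ ∏ j ∈ m.support, q j ^ m j := by
          calc b ^ 2 ≤ b ^ (m.sum fun _ e => e) :=
                pow_le_pow_of_le_one hb0.le hb1 hdegm
            _ = ∏ j ∈ m.support, b ^ m j := by
                rw [Finsupp.sum, Finset.prod_pow_eq_pow_sum]
            _ ≤ ∏ j ∈ m.support, q j ^ m j := by
                refine Finset.prod_le_prod (fun j _ => pow_nonneg hb0.le _) fun j hj => ?_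
                exact pow_le_pow_left₀ hb0.le (hbound j (hmS j hj)) _
        have hqi : c * b ^ 2 ≤ q i := by
          calc c * b ^ 2 ≤ (P i).coeff m * ∏ j ∈ m.support, q j ^ m j := by
                refine mul_le_mul (hsize i m hm0) hprod (pow_nonneg hb0.le 2) ?_
                exact le_trans hc0.le (hsize i m hm0)
            _ ≤ eval q (P i) := term_le_eval (P i) (hpos i) hq0 m hm0
            _ = q i := congrFun hfix i
        have hcb : c * b ^ 2 = c ^ (2 ^ (k + 1) - 1) := by
          have h1 : 1 ≤ 2 ^ k := Nat.one_le_two_pow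
          have he : 2 ^ (k + 1) - 1 = (2 ^ k - 1) * 2 + 1 := by
            have h2 : 2 ^ (k + 1) = 2 * 2 ^ k := by ring
            omega
          have hrw : c ^ ((2 ^ k - 1) * 2 + 1) = c * (c ^ (2 ^ k - 1)) ^ 2 := by
            rw [pow_succ, pow_mul]; ring
          rw [hbdef, he, hrw]
        refine ⟨insert i S, ?_, fun j hj => ?_⟩
        · rw [Finset.card_insert_of_notMem hiS]
          omega
        · rcases Finset.mem_insert.mp hj with rfl | hjS
          · rw [← hcb]; exact hqi
          · exact le_trans (pow_le_pow_of_le_one hc0.le hc1 hexp) (hbound j hjS)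
  obtain ⟨S, hcard, hbound⟩ := key n
  have hSu : S = Finset.univ := by
    apply Finset.eq_univ_of_card
    have := Finset.card_le_univ S
    simp at this ⊢
    omega
  intro i
  have hbi : c ^ (2 ^ n - 1) ≤ q i := hbound i (hSu ▸ Finset.mem_univ i)
  have hcast : (2 : ℝ) ^ (-((s : ℤ) * (2 ^ n - 1))) = c ^ (2 ^ n - 1 : ℕ) := by
    rw [hcdef, ← zpow_natCast ((2:ℝ) ^ (-(s:ℤ))), ← _root_.zpow_mul]
    congr 1
    have h1 : (1 : ℕ) ≤ 2 ^ n := Nat.one_le_two_pow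
    push_cast [h1]
    ring
  rw [hcast]
  exact hbi
end

section
/- Let x = P(x) be a strongly-connected quadratic MPS in n variables with least fixed point q* > 0 such that some polynomial P_i contains a monomial of degree exactly 2. Then for every z with 0 ≤ z < q* (strictly in every coordinate), the matrix I − B(z) is nonsingular, the Newton iterate N_P(z) = z + (I − B(z))^{−1}(P(z) − z) is defined, and N_P(z) < q* strictly in every coordinate. -/
open Matrix MvPolynomial



open Filter Topology

section helpers

lemma shape2 {n : ℕ} (m : Fin n →₀ ℕ) (h : (m.sum fun _ e => e) ≤ 2) :
    m = 0 ∨ (∃ a, m = Finsupp.single a 1) ∨ (∃ a, m = Finsupp.single a 2) ∨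
      (∃ a b, a ≠ b ∧ m = Finsupp.single a 1 + Finsupp.single b 1) := by
  rw [Finsupp.sum_fintype _ _ (fun _ => rfl)] at h
  by_cases h0 : ∀ j, m j = 0
  · left; ext j; simp [h0 j]
  push_neg at h0
  obtain ⟨a, ha⟩ := h0
  have hsplit : m a + ∑ j ∈ Finset.univ.erase a, m j ≤ 2 := by
    rw [Finset.add_sum_erase _ _ (Finset.mem_univ a)]; exact h
  rcases Nat.lt_or_ge (m a) 2 with h2 | h2
  · have hma : m a = 1 := by omega
    have hrest : ∑ j ∈ Finset.univ.erase a, m j ≤ 1 := by omega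
    by_cases hr0 : ∀ j ∈ Finset.univ.erase a, m j = 0
    · right; left; exact ⟨a, by
        ext j
        rcases eq_or_ne j a with rfl | hj
        · simp [hma]
        · simp [Finsupp.single_apply, hj.symm, hr0 j (by simp [hj])]⟩
    · push_neg at hr0
      obtain ⟨b, hb, hbne⟩ := hr0
      have hbne' : b ≠ a := (Finset.mem_erase.mp hb).1
      have hmb : m b = 1 := by
        have : m b ≤ ∑ j ∈ Finset.univ.erase a, m j :=
          Finset.single_le_sum (fun _ _ => Nat.zero_le _) hb
        omega
      right; right; right
      refine ⟨a, b, hbne'.symm, ?_⟩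
      ext j
      rcases eq_or_ne j a with rfl | hja
      · simp [Finsupp.single_apply, hbne', hma]
      rcases eq_or_ne j b with rfl | hjb
      · simp [Finsupp.single_apply, hja.symm, hmb]
      · have hj0 : m j = 0 := by
          by_contra hj0
          have h1 : (1:ℕ) ≤ m j := Nat.one_le_iff_ne_zero.mpr hj0
          have hjmem : j ∈ Finset.univ.erase a := by simp [hja]
          have hbmem : b ∈ (Finset.univ.erase a).erase j := by simp [hjb.symm, hbne']
          have : m j + m b ≤ ∑ x ∈ Finset.univ.erase a, m x := by
            rw [← Finset.add_sum_erase _ _ hjmem]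
            have : m b ≤ ∑ x ∈ (Finset.univ.erase a).erase j, m x :=
              Finset.single_le_sum (fun _ _ => Nat.zero_le _) hbmem
            omega
          omega
        simp [Finsupp.single_apply, hja.symm, hjb.symm, hj0]
  · have hma : m a = 2 := by omega
    have hr0 : ∀ j ∈ Finset.univ.erase a, m j = 0 := by
      intro j hj
      have : m j ≤ ∑ x ∈ Finset.univ.erase a, m x :=
        Finset.single_le_sum (fun _ _ => Nat.zero_le _) hj
      omega
    right; right; left
    exact ⟨a, by
      ext j
      rcases eq_or_ne j a with rfl | hj
      · simp [hma]
      · simp [Finsupp.single_apply, hj.symm, hr0 j (by simp [hj])]⟩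

lemma taylor_monomial {n : ℕ} (m : Fin n →₀ ℕ) (h : (m.sum fun _ e => e) ≤ 2) (c : ℝ)
    (z d : Fin n → ℝ) :
    eval (fun j => z j + d j) (monomial m c)
      = eval z (monomial m c) + (∑ b, d b * eval z (pderiv b (monomial m c)))
        + (if (m.sum fun _ e => e) = 2 then c * m.prod (fun j e => d j ^ e) else 0) := by
  rcases shape2 m h with rfl | ⟨a, rfl⟩ | ⟨a, rfl⟩ | ⟨a, b, hab, rfl⟩
  · simp [eval_monomial, Finsupp.prod_zero_index, pderiv_monomial]
  · rw [Finset.sum_eq_single a]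
    · simp [eval_monomial, Finsupp.prod_single_index, pderiv_monomial,
        Finsupp.sum_single_index]
      ring
    · intro b _ hb
      simp [pderiv_monomial, Finsupp.single_apply, (Ne.symm hb : a ≠ b)]
    · simp
  · rw [Finset.sum_eq_single a]
    · have : (Finsupp.single a 2 - Finsupp.single a 1) = Finsupp.single a 1 := by
        ext j; simp [Finsupp.single_apply]; split <;> simp
      simp [eval_monomial, Finsupp.prod_single_index, pderiv_monomial, this,
        Finsupp.sum_single_index]
      ring
    · intro b _ hb
      simp [pderiv_monomial, Finsupp.single_apply, (Ne.symm hb : a ≠ b)]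
    · simp
  · have hsum : (((Finsupp.single a 1 + Finsupp.single b 1) : Fin n →₀ ℕ).sum fun _ e => e) = 2 := by
      rw [Finsupp.sum_add_index' (fun _ => rfl) (fun _ _ _ => rfl),
        Finsupp.sum_single_index rfl, Finsupp.sum_single_index rfl]
    have hprod : ∀ x : Fin n → ℝ, (Finsupp.single a 1 + Finsupp.single b 1).prod (fun j e => x j ^ e)
        = x a * x b := by
      intro x
      rw [Finsupp.prod_add_index (by simp) (by intros; rw [pow_add]),
        Finsupp.prod_single_index (by simp), Finsupp.prod_single_index (by simp), pow_one, pow_one]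
    have hma : ((Finsupp.single a 1 + Finsupp.single b 1) : Fin n →₀ ℕ) a = 1 := by
      simp [Finsupp.single_apply, hab, Ne.symm hab]
    have hmb : ((Finsupp.single a 1 + Finsupp.single b 1) : Fin n →₀ ℕ) b = 1 := by
      simp [Finsupp.single_apply, hab]
    have hsa : (Finsupp.single a 1 + Finsupp.single b 1) - Finsupp.single a 1
        = (Finsupp.single b 1 : Fin n →₀ ℕ) := add_tsub_cancel_left _ _
    have hsb : (Finsupp.single a 1 + Finsupp.single b 1) - Finsupp.single b 1
        = (Finsupp.single a 1 : Fin n →₀ ℕ) := by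
      rw [add_comm]; exact add_tsub_cancel_left _ _
    have hsumb : (∑ b', d b' * eval z (pderiv b' (monomial (Finsupp.single a 1 + Finsupp.single b 1) c)))
        = d a * (c * z b) + d b * (c * z a) := by
      rw [show (Finset.univ : Finset (Fin n)) = {a, b} ∪ (Finset.univ \ {a, b}) by
        simp [Finset.union_comm]]
      rw [Finset.sum_union (Finset.disjoint_sdiff)]
      have h1 : ∑ b' ∈ ({a, b} : Finset (Fin n)), d b' * eval z (pderiv b' (monomial (Finsupp.single a 1 + Finsupp.single b 1) c))
          = d a * (c * z b) + d b * (c * z a) := by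
        rw [Finset.sum_pair hab]
        rw [pderiv_monomial, pderiv_monomial, hsa, hsb, hma, hmb]
        simp [eval_monomial, Finsupp.prod_single_index]
      have h2 : ∑ b' ∈ (Finset.univ \ ({a, b} : Finset (Fin n))), d b' * eval z (pderiv b' (monomial (Finsupp.single a 1 + Finsupp.single b 1) c)) = 0 := by
        apply Finset.sum_eq_zero
        intro x hx
        simp only [Finset.mem_sdiff, Finset.mem_insert, Finset.mem_singleton] at hx
        have hxa : ¬ a = x := fun hh => hx.2 (Or.inl hh.symm)
        have hxb : ¬ b = x := fun hh => hx.2 (Or.inr hh.symm)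
        have : ((Finsupp.single a 1 + Finsupp.single b 1) : Fin n →₀ ℕ) x = 0 := by
          simp [Finsupp.single_apply, hxa, hxb]
        rw [pderiv_monomial, this]
        simp
      rw [h1, h2, add_zero]
    rw [hsumb, hsum, if_pos rfl, eval_monomial, eval_monomial, hprod, hprod, hprod]
    ring

lemma taylor2_s12 {n : ℕ} (p : MvPolynomial (Fin n) ℝ) (hdeg : p.totalDegree ≤ 2)
    (z d : Fin n → ℝ) :
    eval (fun j => z j + d j) p
      = eval z p + (∑ b, d b * eval z (pderiv b p))
        + ∑ m ∈ p.support, (if (m.sum fun _ e => e) = 2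
            then coeff m p * m.prod (fun j e => d j ^ e) else 0) := by
  have key : ∀ x : Fin n → ℝ, eval x p = ∑ m ∈ p.support, eval x (monomial m (coeff m p)) := by
    intro x
    conv_lhs => rw [p.as_sum]
    rw [map_sum]
  rw [key, key]
  have keyd : ∀ b, eval z (pderiv b p) = ∑ m ∈ p.support, eval z (pderiv b (monomial m (coeff m p))) := by
    intro b
    conv_lhs => rw [p.as_sum]
    rw [map_sum, map_sum]
  calc ∑ m ∈ p.support, eval (fun j => z j + d j) (monomial m (coeff m p))
      = ∑ m ∈ p.support, (eval z (monomial m (coeff m p))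
          + (∑ b, d b * eval z (pderiv b (monomial m (coeff m p))))
          + (if (m.sum fun _ e => e) = 2 then coeff m p * m.prod (fun j e => d j ^ e) else 0)) := by
        refine Finset.sum_congr rfl fun m hm => ?_
        exact taylor_monomial m (le_trans (le_totalDegree hm) hdeg) _ z d
    _ = _ := by
        rw [Finset.sum_add_distrib, Finset.sum_add_distrib]
        congr 1
        congr 1
        rw [Finset.sum_comm]
        refine Finset.sum_congr rfl fun b _ => ?_
        rw [keyd b, Finset.mul_sum]

section polyhelp
variable {n : ℕ} (p : MvPolynomial (Fin n) ℝ)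

lemma eval_nonneg'_s12 (hp : ∀ m, 0 ≤ coeff m p) (x : Fin n → ℝ) (hx : ∀ j, 0 ≤ x j) :
    0 ≤ eval x p := by
  rw [eval_eq]
  refine Finset.sum_nonneg fun m _ => mul_nonneg (hp m) (Finset.prod_nonneg fun i _ =>
    pow_nonneg (hx i) _)

lemma eval_mono'_s12 (hp : ∀ m, 0 ≤ coeff m p) (x y : Fin n → ℝ) (hx : ∀ j, 0 ≤ x j)
    (hxy : ∀ j, x j ≤ y j) : eval x p ≤ eval y p := by
  rw [eval_eq, eval_eq]
  refine Finset.sum_le_sum fun m _ => mul_le_mul_of_nonneg_left ?_ (hp m)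
  exact Finset.prod_le_prod (fun i _ => pow_nonneg (hx i) _)
    (fun i _ => pow_le_pow_left₀ (hx i) (hxy i) _)

lemma eval_strict' (hp : ∀ m, 0 ≤ coeff m p) (x y : Fin n → ℝ) (hx : ∀ j, 0 ≤ x j)
    (hxy : ∀ j, x j < y j) (hy : ∀ j, 0 < y j) (hm : ∃ m ∈ p.support, m ≠ 0) :
    eval x p < eval y p := by
  obtain ⟨m0, hm0, hm0ne⟩ := hm
  rw [eval_eq, eval_eq]
  refine Finset.sum_lt_sum (fun m _ => mul_le_mul_of_nonneg_left (Finset.prod_le_prod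
      (fun i _ => pow_nonneg (hx i) _) (fun i _ => pow_le_pow_left₀ (hx i) (hxy i).le _)) (hp m))
    ⟨m0, hm0, ?_⟩
  have hc : 0 < coeff m0 p := lt_of_le_of_ne (hp m0) (Ne.symm (mem_support_iff.mp hm0))
  refine mul_lt_mul_of_pos_left ?_ hc
  obtain ⟨j0, hj0⟩ : ∃ j0, m0 j0 ≠ 0 := by
    by_contra hcon; push_neg at hcon; exact hm0ne (Finsupp.ext fun j => hcon j)
  have hj0mem : j0 ∈ m0.support := Finsupp.mem_support_iff.mpr hj0
  rw [← Finset.mul_prod_erase _ _ hj0mem, ← Finset.mul_prod_erase _ _ hj0mem]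
  have h1 : x j0 ^ m0 j0 < y j0 ^ m0 j0 := pow_lt_pow_left₀ (hxy j0) (hx j0) hj0
  have h2 : ∏ i ∈ m0.support.erase j0, x i ^ m0 i ≤ ∏ i ∈ m0.support.erase j0, y i ^ m0 i :=
    Finset.prod_le_prod (fun i _ => pow_nonneg (hx i) _)
      (fun i _ => pow_le_pow_left₀ (hx i) (hxy i).le _)
  have h3 : (0:ℝ) < ∏ i ∈ m0.support.erase j0, y i ^ m0 i :=
    Finset.prod_pos fun i _ => pow_pos (hy i) _
  calc x j0 ^ m0 j0 * ∏ i ∈ m0.support.erase j0, x i ^ m0 i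
      ≤ x j0 ^ m0 j0 * ∏ i ∈ m0.support.erase j0, y i ^ m0 i :=
        mul_le_mul_of_nonneg_left h2 (pow_nonneg (hx j0) _)
    _ < y j0 ^ m0 j0 * ∏ i ∈ m0.support.erase j0, y i ^ m0 i :=
        mul_lt_mul_of_pos_right h1 h3

lemma coeff_pderiv_nonneg (hp : ∀ m, 0 ≤ coeff m p) (b : Fin n) (t : Fin n →₀ ℕ) :
    0 ≤ coeff t (pderiv b p) := by
  conv_rhs => rw [p.as_sum]
  rw [map_sum, coeff_sum]
  refine Finset.sum_nonneg fun m _ => ?_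
  rw [pderiv_monomial, coeff_monomial]
  split
  · exact mul_nonneg (hp m) (Nat.cast_nonneg _)
  · exact le_refl 0


lemma pderiv_ne_zero_support (b : Fin n) (hb : pderiv b p ≠ 0) :
    ∃ m ∈ p.support, m b ≠ 0 := by
  by_contra hcon
  push_neg at hcon
  apply hb
  conv_lhs => rw [p.as_sum]
  rw [map_sum]
  refine Finset.sum_eq_zero fun m hm => ?_
  rw [pderiv_monomial, hcon m hm]
  simp

lemma support_sum_le (m : Fin n →₀ ℕ) (hm : m ∈ p.support) :
    ∑ j, m j ≤ p.totalDegree := by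
  have := le_totalDegree hm
  rwa [Finsupp.sum_fintype _ _ (fun _ => rfl)] at this

lemma affine_pderiv_pos (hdeg1 : p.totalDegree ≤ 1) (hp : ∀ m, 0 ≤ coeff m p)
    (b : Fin n) (hb : pderiv b p ≠ 0) (x : Fin n → ℝ) (hx : ∀ j, 0 ≤ x j) :
    0 < eval x (pderiv b p) := by
  -- any nonzero coefficient of pderiv b p sits at the zero exponent
  obtain ⟨t, ht⟩ : ∃ t, coeff t (pderiv b p) ≠ 0 := by
    by_contra hcon; push_neg at hcon
    exact hb (ext _ _ fun t => by rw [hcon t, coeff_zero])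
  have ht0 : t = 0 := by
    have hsum : coeff t (pderiv b p)
        = ∑ m ∈ p.support, coeff t (pderiv b (monomial m (coeff m p))) := by
      conv_lhs => rw [p.as_sum]
      rw [map_sum, coeff_sum]
    rw [hsum] at ht
    obtain ⟨m, hm, hne⟩ := Finset.exists_ne_zero_of_sum_ne_zero ht
    rw [pderiv_monomial, coeff_monomial] at hne
    have hmb : m b ≠ 0 := by
      intro h0; rw [h0] at hne; simp at hne
    have hmem : m - Finsupp.single b 1 = t := by
      by_contra hc; rw [if_neg hc] at hne; exact hne rfl
    have hmsum : ∑ j, m j ≤ 1 := le_trans (support_sum_le p m hm) hdeg1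
    have hmeq : m = Finsupp.single b 1 := by
      ext j
      rcases eq_or_ne j b with heq | hj
      · rw [heq]
        have h1 : m b ≤ ∑ k, m k := Finset.single_le_sum (fun _ _ => Nat.zero_le _) (Finset.mem_univ b)
        simp only [Finsupp.single_apply, eq_self_iff_true, if_true]
        omega
      · have h2 : m b + m j ≤ ∑ k, m k := by
          rw [← Finset.add_sum_erase _ _ (Finset.mem_univ b)]
          have : m j ≤ ∑ k ∈ Finset.univ.erase b, m k :=
            Finset.single_le_sum (fun _ _ => Nat.zero_le _) (by simp [hj])
          omega
        simp only [Finsupp.single_apply, if_neg (Ne.symm hj)]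
        omega
    rw [← hmem, hmeq]
    simp
  have hc0 : 0 < coeff 0 (pderiv b p) :=
    lt_of_le_of_ne (coeff_pderiv_nonneg p hp b 0) (Ne.symm (ht0 ▸ ht))
  rw [eval_eq]
  have h0mem : (0 : Fin n →₀ ℕ) ∈ (pderiv b p).support := mem_support_iff.mpr (ht0 ▸ ht)
  have hterm : coeff 0 (pderiv b p) * ∏ i ∈ (0 : Fin n →₀ ℕ).support, x i ^ (0 : Fin n →₀ ℕ) i
      = coeff 0 (pderiv b p) := by simp
  calc (0:ℝ) < coeff 0 (pderiv b p) := hc0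
    _ = _ := hterm.symm
    _ ≤ _ := Finset.single_le_sum (f := fun m => coeff m (pderiv b p) * ∏ i ∈ m.support, x i ^ m i)
        (fun m _ => mul_nonneg (coeff_pderiv_nonneg p hp b m)
          (Finset.prod_nonneg fun i _ => pow_nonneg (hx i) _)) h0mem

end polyhelp

section mathelp
variable {n : ℕ}

lemma mulVec_apply' (B : Matrix (Fin n) (Fin n) ℝ) (x : Fin n → ℝ) (i : Fin n) :
    (B *ᵥ x) i = ∑ j, B i j * x j := rfl

lemma mulVec_nonneg' (B : Matrix (Fin n) (Fin n) ℝ) (hB : ∀ i j, 0 ≤ B i j)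
    (x : Fin n → ℝ) (hx : ∀ j, 0 ≤ x j) : ∀ i, 0 ≤ (B *ᵥ x) i := fun i => by
  rw [mulVec_apply']
  exact Finset.sum_nonneg fun j _ => mul_nonneg (hB i j) (hx j)

lemma mulVec_mono' (B : Matrix (Fin n) (Fin n) ℝ) (hB : ∀ i j, 0 ≤ B i j)
    (x y : Fin n → ℝ) (hxy : ∀ j, x j ≤ y j) : ∀ i, (B *ᵥ x) i ≤ (B *ᵥ y) i := fun i => by
  rw [mulVec_apply', mulVec_apply']
  exact Finset.sum_le_sum fun j _ => mul_le_mul_of_nonneg_left (hxy j) (hB i j)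

lemma pow_entry_nonneg (B : Matrix (Fin n) (Fin n) ℝ) (hB : ∀ i j, 0 ≤ B i j) :
    ∀ t i j, 0 ≤ (B ^ t) i j := by
  intro t
  induction t with
  | zero => intro i j; simp [Matrix.one_apply]; split <;> simp
  | succ t ih =>
      intro i j
      rw [pow_succ, Matrix.mul_apply]
      exact Finset.sum_nonneg fun k _ => mul_nonneg (ih i k) (hB k j)

lemma pow_mulVec_le (B : Matrix (Fin n) (Fin n) ℝ) (hB : ∀ i j, 0 ≤ B i j)
    (e : Fin n → ℝ) (hBe : ∀ i, (B *ᵥ e) i ≤ e i) :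
    ∀ t i, ((B ^ t) *ᵥ e) i ≤ e i := by
  intro t
  induction t with
  | zero => intro i; simp
  | succ t ih =>
      intro i
      have h1 : (B ^ (t+1)) *ᵥ e = (B ^ t) *ᵥ (B *ᵥ e) := by
        rw [mulVec_mulVec, ← pow_succ]
      rw [h1]
      exact le_trans (mulVec_mono' _ (pow_entry_nonneg B hB t) _ _ hBe i) (ih i)

lemma unroll (B : Matrix (Fin n) (Fin n) ℝ) (u g : Fin n → ℝ) (hu : u = B *ᵥ u + g) :
    ∀ m, u = (B ^ m) *ᵥ u + ∑ t ∈ Finset.range m, (B ^ t) *ᵥ g := by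
  intro m
  induction m with
  | zero => simp
  | succ m ih =>
      calc u = (B ^ m) *ᵥ u + ∑ t ∈ Finset.range m, (B ^ t) *ᵥ g := ih
        _ = (B ^ m) *ᵥ (B *ᵥ u + g) + ∑ t ∈ Finset.range m, (B ^ t) *ᵥ g := by rw [← hu]
        _ = (B ^ (m+1)) *ᵥ u + ∑ t ∈ Finset.range (m+1), (B ^ t) *ᵥ g := by
            rw [mulVec_add, mulVec_mulVec, ← pow_succ, Finset.sum_range_succ]
            abel

lemma reach_sum (B : Matrix (Fin n) (Fin n) ℝ) (hB : ∀ i j, 0 ≤ B i j)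
    (g : Fin n → ℝ) (hg : ∀ j, 0 ≤ g j) (hr : ∀ j, ∃ t, 0 < ((B ^ t) *ᵥ g) j) :
    ∃ m, ∀ j, 0 < (∑ t ∈ Finset.range m, (B ^ t) *ᵥ g) j := by
  classical
  refine ⟨(Finset.univ.sup fun j => (hr j).choose) + 1, fun j => ?_⟩
  have hmem : (hr j).choose ∈ Finset.range ((Finset.univ.sup fun j => (hr j).choose) + 1) := by
    rw [Finset.mem_range]
    exact Nat.lt_succ_of_le (Finset.le_sup (f := fun j => (hr j).choose) (Finset.mem_univ j))
  have hsum : (∑ t ∈ Finset.range ((Finset.univ.sup fun j => (hr j).choose) + 1), (B ^ t) *ᵥ g) j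
      = ∑ t ∈ Finset.range ((Finset.univ.sup fun j => (hr j).choose) + 1), ((B ^ t) *ᵥ g) j := by
    simp [Finset.sum_apply]
  rw [hsum]
  exact lt_of_lt_of_le (hr j).choose_spec (Finset.single_le_sum
    (f := fun t => ((B ^ t) *ᵥ g) j)
    (fun t _ => mulVec_nonneg' _ (pow_entry_nonneg B hB t) _ hg j) hmem)

lemma core_pos (B : Matrix (Fin n) (Fin n) ℝ) (hB : ∀ i j, 0 ≤ B i j)
    (e : Fin n → ℝ) (he : ∀ i, 0 < e i) (hBe : ∀ i, (B *ᵥ e) i ≤ e i)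
    (g u : Fin n → ℝ) (hg : ∀ i, 0 ≤ g i) (hr : ∀ j, ∃ t, 0 < ((B ^ t) *ᵥ g) j)
    (hu : u = B *ᵥ u + g) : ∀ j, 0 < u j := by
  intro j
  obtain ⟨m, hm⟩ := reach_sum B hB g hg hr
  have hunroll := unroll B u g hu m
  obtain ⟨j0, _, hj0⟩ := Finset.exists_min_image Finset.univ (fun k => u k / e k)
    ⟨j, Finset.mem_univ j⟩
  set c := u j0 / e j0 with hc
  have hce : ∀ k, c * e k ≤ u k := by
    intro k
    rw [← le_div_iff₀ (he k)]
    exact hj0 k (Finset.mem_univ k)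
  have hSapp : ∀ k, (∑ t ∈ Finset.range m, (B ^ t) *ᵥ g) k
      = ∑ t ∈ Finset.range m, ((B ^ t) *ᵥ g) k := by simp [Finset.sum_apply]
  have hcnn : 0 ≤ c := by
    by_contra hcneg
    push_neg at hcneg
    have h1 : ∀ k, c * e k ≤ ((B ^ m) *ᵥ u) k := by
      intro k
      have h2 : ((B ^ m) *ᵥ (c • e)) k ≤ ((B ^ m) *ᵥ u) k :=
        mulVec_mono' _ (pow_entry_nonneg B hB m) _ _ hce k
      have h3 : ((B ^ m) *ᵥ (c • e)) k = c * ((B ^ m) *ᵥ e) k := by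
        rw [mulVec_smul]; rfl
      have h4 : c * e k ≤ c * ((B ^ m) *ᵥ e) k :=
        mul_le_mul_of_nonpos_left (pow_mulVec_le B hB e hBe m k) hcneg.le
      linarith
    have h5 : u j0 = c * e j0 := by
      rw [hc, div_mul_cancel₀]
      exact (he j0).ne'
    have h6 : u j0 = ((B ^ m) *ᵥ u) j0 + (∑ t ∈ Finset.range m, (B ^ t) *ᵥ g) j0 := by
      conv_lhs => rw [hunroll]
      rfl
    have := hm j0
    have := h1 j0
    linarith
  have hu0 : ∀ k, 0 ≤ u k := fun k => le_trans (mul_nonneg hcnn (he k).le) (hce k)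
  have h7 : u j = ((B ^ m) *ᵥ u) j + (∑ t ∈ Finset.range m, (B ^ t) *ᵥ g) j := by
    conv_lhs => rw [hunroll]
    rfl
  have h8 : 0 ≤ ((B ^ m) *ᵥ u) j := mulVec_nonneg' _ (pow_entry_nonneg B hB m) _ hu0 j
  have := hm j
  linarith

lemma core_det (B : Matrix (Fin n) (Fin n) ℝ) (hB : ∀ i j, 0 ≤ B i j)
    (e : Fin n → ℝ) (he : ∀ i, 0 < e i)
    (hstrict : ∃ m, ∀ j, ((B ^ m) *ᵥ e) j < e j) :
    (1 - B).det ≠ 0 := by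
  intro hdet
  obtain ⟨v, hvne, hv⟩ := (Matrix.exists_mulVec_eq_zero_iff).mpr hdet
  have hBv : B *ᵥ v = v := by
    rw [sub_mulVec, one_mulVec] at hv
    have := sub_eq_zero.mp hv
    exact this.symm
  obtain ⟨m, hm⟩ := hstrict
  have hside : ∀ w : Fin n → ℝ, B *ᵥ w = w → ∀ k, w k ≤ 0 := by
    intro w hw k
    have hpow : ∀ t, (B ^ t) *ᵥ w = w := by
      intro t
      induction t with
      | zero => simp
      | succ t ih => rw [pow_succ, ← mulVec_mulVec, hw, ih]
    obtain ⟨j0, _, hj0⟩ := Finset.exists_max_image Finset.univ (fun k => w k / e k)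
      ⟨k, Finset.mem_univ k⟩
    set c := w j0 / e j0 with hc
    have hce : ∀ i, w i ≤ c * e i := by
      intro i
      rw [← div_le_iff₀ (he i)]
      exact hj0 i (Finset.mem_univ i)
    have hcle : c ≤ 0 := by
      by_contra hcpos
      push_neg at hcpos
      have h1 : w j0 = ((B ^ m) *ᵥ w) j0 := by rw [hpow m]
      have h2 : ((B ^ m) *ᵥ w) j0 ≤ ((B ^ m) *ᵥ (c • e)) j0 :=
        mulVec_mono' _ (pow_entry_nonneg B hB m) _ _ hce j0
      have h3 : ((B ^ m) *ᵥ (c • e)) j0 = c * ((B ^ m) *ᵥ e) j0 := by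
        rw [mulVec_smul]; rfl
      have h4 : c * ((B ^ m) *ᵥ e) j0 < c * e j0 :=
        mul_lt_mul_of_pos_left (hm j0) hcpos
      have h5 : w j0 = c * e j0 := by
        rw [hc, div_mul_cancel₀]
        exact (he j0).ne'
      linarith
    calc w k ≤ c * e k := hce k
      _ ≤ 0 := mul_nonpos_of_nonpos_of_nonneg hcle (he k).le
  have hv1 := hside v hBv
  have hv2 := hside (-v) (by rw [mulVec_neg, hBv])
  apply hvne
  funext k
  have := hv2 k
  simp only [Pi.neg_apply, neg_nonpos] at this
  exact le_antisymm (hv1 k) this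

end mathelp

theorem stmt12 {n : ℕ} (P : Fin n → MvPolynomial (Fin n) ℝ)
    (hdeg : ∀ i, (P i).totalDegree ≤ 2) (hpos : ∀ i m, 0 ≤ (P i).coeff m)
    (hsc : StronglyConnectedMPS P)
    (hnl : ∃ i, (P i).totalDegree = 2)
    (q : Fin n → ℝ) (hq : ∀ i, 0 < q i) (hfix : evalVec P q = q)
    (hleast : ∀ r : Fin n → ℝ, 0 ≤ r → evalVec P r = r → q ≤ r)
    (z : Fin n → ℝ) (hz0 : 0 ≤ z) (hzq : ∀ i, z i < q i) :
    IsUnit (1 - jacob P z).det ∧ ∀ i, newtonOp P z i < q i := by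
  classical
  obtain ⟨i0, hi0⟩ := hnl
  have hz0' : ∀ j, 0 ≤ z j := fun j => hz0 j
  have hfix' : ∀ i, eval q (P i) = q i := fun i => congrFun hfix i
  set B := jacob P z with hBdef
  have hBentry : ∀ i j, B i j = eval z (pderiv j (P i)) := fun i j => rfl
  have hBnn : ∀ i j, 0 ≤ B i j := fun i j =>
    eval_nonneg'_s12 _ (coeff_pderiv_nonneg _ (hpos i) j) z hz0'
  -- the degree-2 monomial of P i0
  obtain ⟨m0, hm0supp, hm0deg⟩ : ∃ m ∈ (P i0).support, (m.sum fun _ e => e) = 2 := by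
    have hne : P i0 ≠ 0 := by
      intro h
      rw [h, totalDegree_zero] at hi0
      exact two_ne_zero hi0.symm
    obtain ⟨m, hm, hs⟩ := Finset.exists_mem_eq_sup (P i0).support
      (support_nonempty.mpr hne) (fun m => m.sum fun _ e => e)
    exact ⟨m, hm, by rw [← hs]; exact hi0⟩
  -- every P i is nonconstant
  have hnonconst : ∀ i, ∃ m ∈ (P i).support, m ≠ 0 := by
    intro i
    rcases Relation.ReflTransGen.cases_head (hsc i i0) with heq | ⟨c, hic, _⟩
    · subst heq
      exact ⟨m0, hm0supp, fun h => by simp [h] at hm0deg⟩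
    · obtain ⟨m, hm, hmb⟩ := pderiv_ne_zero_support (P i) _ hic
      exact ⟨m, hm, fun h => hmb (by rw [h]; rfl)⟩
  -- quadratic or affine dichotomy
  have hq2 : ∀ i, (∃ m ∈ (P i).support, (m.sum fun _ e => e) = 2) ∨ (P i).totalDegree ≤ 1 := by
    intro i
    by_cases hcase : ∃ m ∈ (P i).support, (m.sum fun _ e => e) = 2
    · exact Or.inl hcase
    · push_neg at hcase
      right
      rw [totalDegree]
      refine Finset.sup_le fun m hm => ?_
      have h1 : (m.sum fun _ e => e) ≤ 2 := le_trans (le_totalDegree hm) (hdeg i)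
      have h2 := hcase m hm
      omega
  -- Kleene iteration
  set F : (Fin n → ℝ) → (Fin n → ℝ) := fun v => evalVec P v with hF
  set x : ℕ → Fin n → ℝ := fun k => F^[k] 0 with hxdef
  have hxsucc : ∀ k, x (k+1) = F (x k) := fun k => Function.iterate_succ_apply' F k 0
  have hxsucc' : ∀ k i, x (k+1) i = eval (x k) (P i) := fun k i => congrFun (hxsucc k) i
  have hxnn : ∀ k i, 0 ≤ x k i := by
    intro k
    induction k with
    | zero => intro i; exact le_refl 0
    | succ k ih =>
        intro i
        rw [hxsucc' k i]
        exact eval_nonneg'_s12 _ (hpos i) _ ih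
  have hxlt : ∀ k i, x k i < q i := by
    intro k
    induction k with
    | zero => intro i; exact hq i
    | succ k ih =>
        intro i
        rw [hxsucc' k i, ← hfix' i]
        exact eval_strict' _ (hpos i) _ q (hxnn k) ih hq (hnonconst i)
  have hxmono : ∀ k i, x k i ≤ x (k+1) i := by
    intro k
    induction k with
    | zero => intro i; rw [hxsucc' 0 i]; exact eval_nonneg'_s12 _ (hpos i) _ (hxnn 0)
    | succ k ih =>
        intro i
        rw [hxsucc' k i, hxsucc' (k+1) i]
        exact eval_mono'_s12 _ (hpos i) _ _ (hxnn k) ih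
  have hmono2 : ∀ i, Monotone fun k => x k i := fun i =>
    monotone_nat_of_le_succ (fun k => hxmono k i)
  have hbdd : ∀ i, BddAbove (Set.range fun k => x k i) := fun i =>
    ⟨q i, fun v ⟨k, hk⟩ => hk ▸ (hxlt k i).le⟩
  have hqsup : ∀ i, q i = ⨆ k, x k i := by
    have htend : ∀ i, Tendsto (fun k => x k i) atTop (nhds (⨆ k, x k i)) := fun i =>
      tendsto_atTop_ciSup (hmono2 i) (hbdd i)
    set c : Fin n → ℝ := fun i => ⨆ k, x k i with hcdef
    have hcfix : evalVec P c = c := by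
      funext i
      have h1 : Tendsto (fun k => x k) atTop (nhds c) := tendsto_pi_nhds.mpr htend
      have h2 : Tendsto (fun k => eval (x k) (P i)) atTop (nhds (eval c (P i))) :=
        ((MvPolynomial.continuous_eval (P i)).tendsto c).comp h1
      have h3 : Tendsto (fun k => x (k+1) i) atTop (nhds (c i)) :=
        (htend i).comp (tendsto_add_atTop_nat 1)
      have h4 : (fun k => x (k+1) i) = fun k => eval (x k) (P i) := by
        funext k; exact hxsucc' k i
      rw [h4] at h3
      exact tendsto_nhds_unique h2 h3
    have hc0 : (0 : Fin n → ℝ) ≤ c := fun i =>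
      le_trans (le_refl 0) (le_ciSup (hbdd i) 0)
    have hqc : q ≤ c := hleast c hc0 hcfix
    have hcq : ∀ i, c i ≤ q i := fun i => ciSup_le fun k => (hxlt k i).le
    exact fun i => le_antisymm (hqc i) (hcq i)
  -- pick a Kleene iterate above z
  have hex : ∀ i, ∃ k, z i < x k i := by
    intro i
    have : z i < ⨆ k, x k i := by rw [← hqsup i]; exact hzq i
    exact exists_lt_of_lt_ciSup this
  choose ki hki using hex
  set K := Finset.univ.sup ki with hK
  set y : Fin n → ℝ := x K with hy
  have hzy : ∀ i, z i ≤ y i := fun i =>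
    le_trans (hki i).le (hmono2 i (Finset.le_sup (f := ki) (Finset.mem_univ i)))
  have hyq : ∀ i, y i < q i := hxlt K
  have hynn : ∀ i, 0 ≤ y i := hxnn K
  have hyP : ∀ i, y i ≤ eval y (P i) := by
    intro i
    have := hxmono K i
    rwa [hxsucc' K i] at this
  -- direction vectors
  set d : Fin n → ℝ := fun i => q i - z i with hd
  set e : Fin n → ℝ := fun i => q i - y i with he
  have hdpos : ∀ i, 0 < d i := fun i => sub_pos.mpr (hzq i)
  have hepos : ∀ i, 0 < e i := fun i => sub_pos.mpr (hyq i)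
  -- remainder
  set Rem : (Fin n → ℝ) → Fin n → ℝ := fun w i => ∑ m ∈ (P i).support,
    (if (m.sum fun _ e => e) = 2 then coeff m (P i) * m.prod (fun j e => w j ^ e) else 0)
    with hRem
  have hRemnn : ∀ (w : Fin n → ℝ), (∀ j, 0 ≤ w j) → ∀ i, 0 ≤ Rem w i := by
    intro w hw i
    refine Finset.sum_nonneg fun m _ => ?_
    split
    · exact mul_nonneg (hpos i m) (by
        rw [Finsupp.prod]
        exact Finset.prod_nonneg fun j _ => pow_nonneg (hw j) _)
    · exact le_refl 0
  have hRempos : ∀ (w : Fin n → ℝ), (∀ j, 0 < w j) → ∀ i,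
      (∃ m ∈ (P i).support, (m.sum fun _ e => e) = 2) → 0 < Rem w i := by
    intro w hw i hexm
    obtain ⟨m', hm', hm'2⟩ := hexm
    have hterm : 0 < (if (m'.sum fun _ e => e) = 2
        then coeff m' (P i) * m'.prod (fun j ee => w j ^ ee) else 0) := by
      rw [if_pos hm'2]
      refine mul_pos (lt_of_le_of_ne (hpos i m') (Ne.symm (mem_support_iff.mp hm'))) ?_
      rw [Finsupp.prod]
      exact Finset.prod_pos fun j _ => pow_pos (hw j) _
    refine lt_of_lt_of_le hterm (Finset.single_le_sum (f := fun m =>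
      (if (m.sum fun _ e => e) = 2 then coeff m (P i) * m.prod (fun j ee => w j ^ ee) else 0))
      (fun m _ => ?_) hm')
    split
    · exact mul_nonneg (hpos i m) (by
        rw [Finsupp.prod]
        exact Finset.prod_nonneg fun j _ => pow_nonneg (hw j).le _)
    · exact le_refl 0
  -- Taylor expansions
  have taylorAt : ∀ (w : Fin n → ℝ) (i : Fin n),
      q i = eval w (P i) + (∑ b, (q b - w b) * eval w (pderiv b (P i)))
        + Rem (fun j => q j - w j) i := by
    intro w i
    have h1 := taylor2_s12 (P i) (hdeg i) w (fun j => q j - w j)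
    have h2 : (fun j => w j + (q j - w j)) = q := funext fun j => by ring
    rw [h2] at h1
    rw [← hfix' i]
    exact h1
  -- B(z) column sums against e
  set By := jacob P y with hBy
  have hBynn : ∀ i j, 0 ≤ By i j := fun i j =>
    eval_nonneg'_s12 _ (coeff_pderiv_nonneg _ (hpos i) j) y hynn
  have hBle : ∀ i j, B i j ≤ By i j := fun i j =>
    eval_mono'_s12 _ (coeff_pderiv_nonneg _ (hpos i) j) z y hz0' hzy
  have hTy : ∀ i, (By *ᵥ e) i = q i - eval y (P i) - Rem e i := by
    intro i
    have h1 := taylorAt y i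
    have h2 : (By *ᵥ e) i = ∑ b, (q b - y b) * eval y (pderiv b (P i)) := by
      rw [mulVec_apply']
      exact Finset.sum_congr rfl fun b _ => by rw [mul_comm]; rfl
    rw [h2]
    have h3 : Rem (fun j => q j - y j) i = Rem e i := rfl
    linarith [h1, h3.symm ▸ h1]
  have hBe : ∀ i, (B *ᵥ e) i + Rem e i ≤ e i := by
    intro i
    have h1 : (B *ᵥ e) i ≤ (By *ᵥ e) i := by
      rw [mulVec_apply', mulVec_apply']
      exact Finset.sum_le_sum fun j _ => mul_le_mul_of_nonneg_right (hBle i j) (hepos j).le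
    have h2 := hTy i
    have h3 := hyP i
    have : e i = q i - y i := rfl
    linarith
  have hBee : ∀ i, (B *ᵥ e) i ≤ e i := fun i =>
    le_trans (le_add_of_nonneg_right (hRemnn e (fun j => (hepos j).le) i)) (hBe i)
  -- reachability
  have hreach : ∀ (g : Fin n → ℝ), (∀ j, 0 ≤ g j) →
      (∀ a, (∃ m ∈ (P a).support, (m.sum fun _ e => e) = 2) → 0 < g a) →
      ∀ j, ∃ t, 0 < ((B ^ t) *ᵥ g) j := by
    intro g hgnn hgq j
    refine Relation.ReflTransGen.head_induction_on (hsc j i0) ?_ ?_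
    · refine ⟨0, ?_⟩
      rw [pow_zero, one_mulVec]
      exact hgq i0 ⟨m0, hm0supp, hm0deg⟩
    · intro a c h' h ih
      rcases hq2 a with hquad | haff
      · refine ⟨0, ?_⟩
        rw [pow_zero, one_mulVec]
        exact hgq a hquad
      · obtain ⟨t, ht⟩ := ih
        have hBac : 0 < B a c := affine_pderiv_pos (P a) haff (hpos a) c h' z hz0'
        refine ⟨t+1, ?_⟩
        have hrw : (B ^ (t+1)) *ᵥ g = B *ᵥ ((B ^ t) *ᵥ g) := by
          rw [mulVec_mulVec, ← pow_succ']
        rw [hrw, mulVec_apply']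
        have hnn : ∀ k, 0 ≤ ((B ^ t) *ᵥ g) k :=
          mulVec_nonneg' _ (pow_entry_nonneg B hBnn t) _ hgnn
        have hterm : 0 < B a c * ((B ^ t) *ᵥ g) c := mul_pos hBac ht
        refine lt_of_lt_of_le hterm (Finset.single_le_sum (f := fun k => B a k * ((B ^ t) *ᵥ g) k)
          (fun k _ => mul_nonneg (hBnn a k) (hnn k)) (Finset.mem_univ c))
  -- determinant nonzero
  have hreachRy : ∀ j, ∃ t, 0 < ((B ^ t) *ᵥ (Rem e)) j :=
    hreach (Rem e) (hRemnn e (fun j => (hepos j).le))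
      (fun a ha => hRempos e hepos a ha)
  set r : Fin n → ℝ := fun i => e i - (B *ᵥ e) i with hr
  have hrRem : ∀ i, Rem e i ≤ r i := fun i => by
    have := hBe i; simp only [hr]; linarith
  have hrnn : ∀ i, 0 ≤ r i := fun i =>
    le_trans (hRemnn e (fun j => (hepos j).le) i) (hrRem i)
  have hreachr : ∀ j, ∃ t, 0 < ((B ^ t) *ᵥ r) j := by
    intro j
    obtain ⟨t, ht⟩ := hreachRy j
    exact ⟨t, lt_of_lt_of_le ht
      (mulVec_mono' _ (pow_entry_nonneg B hBnn t) _ _ hrRem j)⟩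
  obtain ⟨m1, hm1⟩ := reach_sum B hBnn r hrnn hreachr
  have hue : e = B *ᵥ e + r := by
    funext i
    simp only [Pi.add_apply, hr]
    ring
  have hstrict : ∀ j, ((B ^ m1) *ᵥ e) j < e j := by
    intro j
    have h1 := congrFun (unroll B e r hue m1) j
    have h2 := hm1 j
    simp only [Pi.add_apply] at h1
    linarith
  have hdet : (1 - B).det ≠ 0 := core_det B hBnn e hepos ⟨m1, hstrict⟩
  have hunit : IsUnit (1 - B).det := isUnit_iff_ne_zero.mpr hdet
  refine ⟨hunit, ?_⟩
  -- Newton step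
  set A := 1 - B with hA
  set Rz : Fin n → ℝ := Rem d with hRz
  have hRznn : ∀ i, 0 ≤ Rz i := hRemnn d (fun j => (hdpos j).le)
  set w : Fin n → ℝ := A⁻¹ *ᵥ Rz with hw
  have hTz : ∀ i, (B *ᵥ d) i = q i - eval z (P i) - Rz i := by
    intro i
    have h1 := taylorAt z i
    have h2 : (B *ᵥ d) i = ∑ b, (q b - z b) * eval z (pderiv b (P i)) := by
      rw [mulVec_apply']
      exact Finset.sum_congr rfl fun b _ => by rw [mul_comm]; rfl
    rw [h2]
    have h3 : Rem (fun j => q j - z j) i = Rz i := rfl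
    linarith [h1]
  have hPz : evalVec P z - z = A *ᵥ d - Rz := by
    funext i
    have h1 : (A *ᵥ d) i = d i - (B *ᵥ d) i := by
      rw [hA, sub_mulVec, one_mulVec]; rfl
    have h2 := hTz i
    simp only [Pi.sub_apply, evalVec]
    rw [h1]
    have : d i = q i - z i := rfl
    linarith
  have hAinvA : ∀ v : Fin n → ℝ, A⁻¹ *ᵥ (A *ᵥ v) = v := by
    intro v
    rw [mulVec_mulVec, Matrix.nonsing_inv_mul A hunit, one_mulVec]
  have hNform : ∀ i, newtonOp P z i = q i - w i := by
    intro i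
    have h0 : newtonOp P z = z + A⁻¹ *ᵥ (evalVec P z - z) := rfl
    rw [h0, hPz, mulVec_sub, hAinvA]
    simp only [Pi.add_apply, Pi.sub_apply]
    have : d i = q i - z i := rfl
    rw [← hw]
    linarith
  have huw : w = B *ᵥ w + Rz := by
    have h1 : A *ᵥ w = Rz := by
      rw [hw, mulVec_mulVec, Matrix.mul_nonsing_inv A hunit, one_mulVec]
    have h2 : A *ᵥ w = w - B *ᵥ w := by rw [hA, sub_mulVec, one_mulVec]
    rw [h2] at h1
    funext i
    have := congrFun h1 i
    simp only [Pi.sub_apply] at this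
    simp only [Pi.add_apply]
    linarith
  have hreachRz : ∀ j, ∃ t, 0 < ((B ^ t) *ᵥ Rz) j :=
    hreach Rz hRznn (fun a ha => hRempos d hdpos a ha)
  have hwpos : ∀ j, 0 < w j := core_pos B hBnn e hepos hBee Rz w hRznn hreachRz huw
  intro i
  rw [hNform i]
  linarith [hwpos i]
end helpers
end

section
/- Let x = P(x) be an MPS such that P is affine, i.e., P(x) = Bx + c with B a nonnegative n×n matrix and c a nonnegative vector, strongly connected, with least fixed point q* > 0. Then ρ(B) < 1, I − B is nonsingular, and q* = (I − B)^{−1} c is the unique solution of x = Bx + c. -/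
open Matrix

lemma powEntry_nonneg {n : ℕ} {B : Matrix (Fin n) (Fin n) ℝ} (hB : ∀ i j, 0 ≤ B i j) :
    ∀ k i j, 0 ≤ (B ^ k) i j := by
  intro k
  induction k with
  | zero => intro i j; by_cases h : i = j <;> simp [pow_zero, Matrix.one_apply, h]
  | succ k ih =>
    intro i j
    rw [pow_succ, Matrix.mul_apply]
    exact Finset.sum_nonneg fun m _ => mul_nonneg (ih i m) (hB m j)

lemma path_pow_pos {n : ℕ} {B : Matrix (Fin n) (Fin n) ℝ} (hB : ∀ i j, 0 ≤ B i j)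
    {i j : Fin n} (h : Relation.ReflTransGen (fun a b => 0 < B a b) i j) :
    ∃ k, 0 < (B ^ k) i j := by
  induction h with
  | refl => exact ⟨0, by simp [Matrix.one_apply]⟩
  | tail _ hbc ih =>
    obtain ⟨k, hk⟩ := ih
    rename_i b c' _
    refine ⟨k + 1, ?_⟩
    rw [pow_succ, Matrix.mul_apply]
    have : 0 < (B ^ k) i b * B b c' := mul_pos hk hbc
    refine lt_of_lt_of_le this ?_
    exact Finset.single_le_sum (f := fun m => (B ^ k) i m * B m c')
      (fun m _ => mul_nonneg (powEntry_nonneg hB k i m) (hB m c')) (Finset.mem_univ b)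

lemma keyLem {n : ℕ} {A : Matrix (Fin n) (Fin n) ℝ} (hA : ∀ i j, 0 ≤ A i j)
    {q : Fin n → ℝ} (hq : ∀ i, 0 < q i) (hAq : ∀ i, (A *ᵥ q) i < q i)
    {w : Fin n → ℝ} (hw : ∀ i, 0 ≤ w i) (hle : ∀ i, w i ≤ (A *ᵥ w) i) : w = 0 := by
  rcases Nat.eq_zero_or_pos n with hn | hn
  · subst hn; funext i; exact i.elim0
  obtain ⟨i0, -, hmax⟩ := Finset.exists_max_image Finset.univ (fun i => w i / q i)
    ⟨⟨0, hn⟩, Finset.mem_univ _⟩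
  set t := w i0 / q i0 with ht
  have hwt : ∀ j, w j ≤ t * q j := by
    intro j
    have := hmax j (Finset.mem_univ j)
    calc w j = (w j / q j) * q j := by rw [div_mul_cancel₀ _ (hq j).ne']
    _ ≤ t * q j := by nlinarith [hq j]
  rcases le_or_gt t 0 with htle | htpos
  · funext j
    have := hwt j
    have := hw j
    have := hq j
    simp only [Pi.zero_apply]
    nlinarith
  · exfalso
    have hwi0 : w i0 = t * q i0 := by rw [ht, div_mul_cancel₀ _ (hq i0).ne']
    have h1 : (A *ᵥ w) i0 ≤ t * (A *ᵥ q) i0 := by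
      simp only [Matrix.mulVec, dotProduct, Finset.mul_sum]
      exact Finset.sum_le_sum fun j _ => by nlinarith [hA i0 j, hwt j]
    have := hle i0
    nlinarith [hAq i0]

lemma iterId {n : ℕ} {B : Matrix (Fin n) (Fin n) ℝ} {c q : Fin n → ℝ}
    (hfix : B *ᵥ q + c = q) (k : ℕ) :
    q = (B ^ k) *ᵥ q + ∑ j ∈ Finset.range k, (B ^ j) *ᵥ c := by
  induction k with
  | zero => simp [Matrix.one_mulVec]
  | succ k ih =>
    conv_lhs => rw [ih]
    rw [Finset.sum_range_succ]
    have : (B ^ (k+1)) *ᵥ q + (B ^ k) *ᵥ c = (B ^ k) *ᵥ q := by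
      have : B *ᵥ q = q - c := eq_sub_of_add_eq hfix
      rw [pow_succ, ← Matrix.mulVec_mulVec, this, Matrix.mulVec_sub]
      abel
    rw [← this]; abel


theorem stmt14 {n : ℕ} (B : Matrix (Fin n) (Fin n) ℝ) (hB : ∀ i j, 0 ≤ B i j)
    (hirr : MatIrreducible B) (c : Fin n → ℝ) (hc : 0 ≤ c)
    (q : Fin n → ℝ) (hq : ∀ i, 0 < q i) (hfix : B *ᵥ q + c = q)
    (hleast : ∀ r : Fin n → ℝ, 0 ≤ r → B *ᵥ r + c = r → q ≤ r) :
    specRad B < 1 ∧ IsUnit (1 - B).det ∧ q = (1 - B)⁻¹ *ᵥ c ∧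
      ∀ x : Fin n → ℝ, B *ᵥ x + c = x → x = q := by
  -- some coordinate of c is positive (given any index exists)
  have hcpos : ∀ _i : Fin n, ∃ j, 0 < c j := by
    intro i
    by_contra h
    push_neg at h
    have hc0 : c = 0 := funext fun j => le_antisymm (h j) (hc j)
    have := hleast 0 (le_refl _) (by simp [hc0])
    exact absurd (this i) (not_le.2 (hq i))
  have hstep : ∀ i, ∃ k, 0 < ((B ^ k) *ᵥ c) i := by
    intro i
    obtain ⟨j, hj⟩ := hcpos i
    obtain ⟨k, hk⟩ := path_pow_pos hB (hirr i j)
    refine ⟨k, ?_⟩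
    have h1 : 0 < (B ^ k) i j * c j := mul_pos hk hj
    simp only [Matrix.mulVec, dotProduct]
    exact lt_of_lt_of_le h1 (Finset.single_le_sum
      (fun m _ => mul_nonneg (powEntry_nonneg hB k i m) (hc m)) (Finset.mem_univ j))
  choose f hf using hstep
  set K := (Finset.univ.sup f) + 1 with hK
  set A := B ^ K with hAdef
  have hA : ∀ i j, 0 ≤ A i j := powEntry_nonneg hB K
  have hS : ∀ i, 0 < (∑ j ∈ Finset.range K, (B ^ j) *ᵥ c) i := by
    intro i
    have hmem : f i ∈ Finset.range K :=
      Finset.mem_range.2 (Nat.lt_succ_of_le (Finset.le_sup (Finset.mem_univ i)))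
    have h2 : ((B ^ (f i)) *ᵥ c) i ≤ ∑ j ∈ Finset.range K, ((B ^ j) *ᵥ c) i :=
      Finset.single_le_sum (f := fun j => ((B ^ j) *ᵥ c) i)
        (fun j _ => by
          simp only [Matrix.mulVec, dotProduct]
          exact Finset.sum_nonneg fun m _ => mul_nonneg (powEntry_nonneg hB j i m) (hc m))
        hmem
    have h3 : (∑ j ∈ Finset.range K, (B ^ j) *ᵥ c) i
        = ∑ j ∈ Finset.range K, ((B ^ j) *ᵥ c) i := Finset.sum_apply i _ _
    rw [h3]
    exact lt_of_lt_of_le (hf i) h2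
  have hAq : ∀ i, (A *ᵥ q) i < q i := by
    intro i
    have h1 := congrFun (iterId hfix K) i
    simp only [Pi.add_apply] at h1
    have := hS i
    rw [h1]
    linarith
  -- invertibility of 1 - B over ℝ
  have hdet : (1 - B).det ≠ 0 := by
    intro h
    obtain ⟨v, hv0, hv⟩ := (Matrix.exists_mulVec_eq_zero_iff).2 h
    have hBv : B *ᵥ v = v := by
      rw [Matrix.sub_mulVec, Matrix.one_mulVec, sub_eq_zero] at hv
      exact hv.symm
    have hAv : A *ᵥ v = v := by
      rw [hAdef]
      clear hAq hA hAdef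
      induction K with
      | zero => simp [Matrix.one_mulVec]
      | succ m ih =>
        rw [pow_succ, ← Matrix.mulVec_mulVec, hBv, ih]
    have hw0 : (fun i => |v i|) = 0 := by
      refine keyLem hA hq hAq (fun i => abs_nonneg _) (fun i => ?_)
      calc |v i| = |(A *ᵥ v) i| := by rw [hAv]
        _ = |∑ j, A i j * v j| := by simp [Matrix.mulVec, dotProduct]
        _ ≤ ∑ j, |A i j * v j| := Finset.abs_sum_le_sum_abs _ _
        _ = ∑ j, A i j * |v j| := Finset.sum_congr rfl fun j _ => by
              rw [abs_mul, abs_of_nonneg (hA i j)]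
        _ = (A *ᵥ fun k => |v k|) i := by simp [Matrix.mulVec, dotProduct]
    exact hv0 (funext fun i => abs_eq_zero.1 (congrFun hw0 i))
  have hdetU : IsUnit (1 - B).det := isUnit_iff_ne_zero.2 hdet
  -- complex eigenvalue bound
  have hspec : ∀ z ∈ spectrum ℂ (B.map (algebraMap ℝ ℂ)), ‖z‖ < 1 := by
    intro z hz
    set Bc := B.map (algebraMap ℝ ℂ) with hBc
    have hnu : ¬ IsUnit (algebraMap ℂ _ z - Bc) := spectrum.mem_iff.1 hz
    have hdet0 : (algebraMap ℂ (Matrix (Fin n) (Fin n) ℂ) z - Bc).det = 0 := by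
      by_contra h
      exact hnu ((Matrix.isUnit_iff_isUnit_det _).2 (isUnit_iff_ne_zero.2 h))
    obtain ⟨v, hv0, hv⟩ := (Matrix.exists_mulVec_eq_zero_iff).2 hdet0
    have hBv : Bc *ᵥ v = z • v := by
      rw [Matrix.sub_mulVec, sub_eq_zero] at hv
      rw [← hv, Algebra.algebraMap_eq_smul_one, Matrix.smul_mulVec,
        Matrix.one_mulVec]
    by_contra hge
    push_neg at hge
    have hpow : ∀ m, (Bc ^ m) *ᵥ v = (z ^ m) • v := by
      intro m
      induction m with
      | zero => simp [Matrix.one_mulVec]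
      | succ m ih =>
        rw [pow_succ, ← Matrix.mulVec_mulVec, hBv, Matrix.mulVec_smul, ih,
          pow_succ, mul_smul, smul_comm]
    have hmap : Bc ^ K = A.map (algebraMap ℝ ℂ) := by
      rw [hAdef, hBc]
      exact ((RingHom.mapMatrix (algebraMap ℝ ℂ)).map_pow B K).symm
    set w := fun i => ‖v i‖ with hwdef
    have key : ∀ i, w i ≤ (A *ᵥ w) i := by
      intro i
      have hzK : (1:ℝ) ≤ ‖z‖ ^ K := one_le_pow₀ hge
      calc w i ≤ ‖z‖ ^ K * w i := le_mul_of_one_le_left (norm_nonneg _) hzK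
        _ = ‖(z ^ K) • v i‖ := by rw [norm_smul, norm_pow]
        _ = ‖((z ^ K) • v) i‖ := rfl
        _ = ‖((Bc ^ K) *ᵥ v) i‖ := by rw [hpow]
        _ = ‖∑ j, (algebraMap ℝ ℂ) (A i j) * v j‖ := by
              rw [hmap]; simp [Matrix.mulVec, dotProduct, Matrix.map_apply]
        _ ≤ ∑ j, ‖(algebraMap ℝ ℂ) (A i j) * v j‖ := norm_sum_le _ _
        _ = ∑ j, A i j * w j := Finset.sum_congr rfl fun j _ => by
              rw [norm_mul, show ((algebraMap ℝ ℂ) (A i j)) = ((A i j : ℝ) : ℂ) from rfl,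
                Complex.norm_real, Real.norm_eq_abs, abs_of_nonneg (hA i j)]
        _ = (A *ᵥ w) i := by simp [Matrix.mulVec, dotProduct]
    have hw0 := keyLem hA hq hAq (fun i => norm_nonneg _) key
    exact hv0 (funext fun i => norm_eq_zero.1 (congrFun hw0 i))
  -- spectral radius bound
  have h1 : specRad B < 1 := by
    rw [specRad, spectralRadius]
    have hfin := Matrix.finite_spectrum (R := ℂ) (B.map (algebraMap ℝ ℂ))
    have hle : (⨆ z ∈ spectrum ℂ (B.map (algebraMap ℝ ℂ)), (‖z‖₊ : ENNReal))
        ≤ hfin.toFinset.sup (fun z => (‖z‖₊ : ENNReal)) :=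
      iSup₂_le fun z hz => Finset.le_sup (f := fun z => (‖z‖₊ : ENNReal)) (hfin.mem_toFinset.2 hz)
    refine lt_of_le_of_lt hle ?_
    rw [Finset.sup_lt_iff (by simp : (⊥ : ENNReal) < 1)]
    intro z hz
    have hzlt := hspec z (hfin.mem_toFinset.1 hz)
    have : ‖z‖₊ < 1 := by
      rw [← NNReal.coe_lt_coe, coe_nnnorm, NNReal.coe_one]
      exact hzlt
    exact_mod_cast this
  -- fixed point identity
  have hcq : (1 - B) *ᵥ q = c := by
    have hb : B *ᵥ q = q - c := eq_sub_of_add_eq hfix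
    rw [Matrix.sub_mulVec, Matrix.one_mulVec, hb]
    abel
  have hinv : ∀ y : Fin n → ℝ, (1 - B) *ᵥ y = c → y = (1 - B)⁻¹ *ᵥ c := by
    intro y hy
    rw [← hy, Matrix.mulVec_mulVec, Matrix.nonsing_inv_mul _ hdetU, Matrix.one_mulVec]
  have hq_eq : q = (1 - B)⁻¹ *ᵥ c := hinv q hcq
  refine ⟨h1, hdetU, hq_eq, fun x hx => ?_⟩
  have hcx : (1 - B) *ᵥ x = c := by
    have hb : B *ᵥ x = x - c := eq_sub_of_add_eq hx
    rw [Matrix.sub_mulVec, Matrix.one_mulVec, hb]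
    abel
  rw [hinv x hcx, ← hq_eq]
end
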